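/- arXiv:1701.09087 — 4 statements merged into one kernel-verified Lean document; each statement's English description precedes it below -/
import Mathlib

section
/- In the Cantor game on [a₀, b₀] with an uncountable target set S ⊆ [a₀, b₀], the limit set of any strategy for player A contains a generalized Cantor set. -/
open Filter Set

/-- Data generating a generalized Cantor set: closed intervals
`I_{i₁,…,iₙ} = [c l, d l]` indexed by nonempty finite binary sequences
(`l : List Bool`, with the last entry the most recently added index),
inside a closed interval `[lo, hi]`, with diameters controlled by a strictly
decreasing positive sequence `e` tending to `0`. -/
structure GenCantor where
  lo : ℝ
  hi : ℝ
  lo_lt_hi : lo < hi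
  e : ℕ → ℝ
  e_pos : ∀ n : ℕ, 0 < e n
  e_anti : StrictAnti e
  e_lim : Filter.Tendsto e Filter.atTop (nhds 0)
  c : List Bool → ℝ
  d : List Bool → ℝ
  diam_pos : ∀ l : List Bool, l ≠ [] → 0 < d l - c l
  diam_lt : ∀ l : List Bool, l ≠ [] → d l - c l < e l.length
  root_sub : ∀ i : Bool, Set.Icc (c [i]) (d [i]) ⊆ Set.Icc lo hi
  nested : ∀ l : List Bool, l ≠ [] → ∀ i : Bool,
    Set.Icc (c (l ++ [i])) (d (l ++ [i])) ⊆ Set.Icc (c l) (d l)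
  disj : ∀ l : List Bool,
    Set.Icc (c (l ++ [false])) (d (l ++ [false])) ∩
      Set.Icc (c (l ++ [true])) (d (l ++ [true])) = ∅

/-- The generalized Cantor set generated by the data `G`:
`C = ⋂_{n ≥ 1} ⋃_{i₁,…,iₙ} I_{i₁,…,iₙ}`. -/
def GenCantor.C (G : GenCantor) : Set ℝ :=
  ⋂ n : ℕ, ⋃ l ∈ {l : List Bool | l.length = n + 1}, Set.Icc (G.c l) (G.d l)

/-- A set of reals is a generalized Cantor set if it is generated by some data. -/
def IsGenCantorSet (C : Set ℝ) : Prop := ∃ G : GenCantor, G.C = C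

/-- The length-`(n+1)` initial segment `[s 0, …, s n]` of a binary sequence. -/
def prefixSeq (s : ℕ → Bool) (n : ℕ) : List Bool := List.ofFn fun i : Fin (n + 1) => s i

/-- A set `P ⊆ ℝ` is perfect if it is closed and each of its points is a
limit point of `P`. -/
def PerfectSet (P : Set ℝ) : Prop := IsClosed P ∧ ∀ x ∈ P, x ∈ closure (P \ {x})

/-- A valid history for player A before A's move number `n+1`:
moves `a 0 = a₀ < a 1 < ⋯ < a n < b n < ⋯ < b 1 < b 0 = b₀`. -/
def ValidHistA (a₀ b₀ : ℝ) {n : ℕ} (a b : Fin (n + 1) → ℝ) : Prop :=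
  a 0 = a₀ ∧ b 0 = b₀ ∧ StrictMono a ∧ StrictAnti b ∧ a (Fin.last n) < b (Fin.last n)

/-- A strategy for player A in the Cantor game on `[a₀, b₀]`:
functions `f n` producing the move `a (n+1)` from the history
`(a 0, b 0, …, a n, b n)`, with `a n < f n a b < b n` on valid histories. -/
structure StratA (a₀ b₀ : ℝ) where
  f : (n : ℕ) → (Fin (n + 1) → ℝ) → (Fin (n + 1) → ℝ) → ℝ
  valid : ∀ (n : ℕ) (a b : Fin (n + 1) → ℝ), ValidHistA a₀ b₀ a b →
    a (Fin.last n) < f n a b ∧ f n a b < b (Fin.last n)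

/-- A valid history for player B before B's move number `n+1`:
`a 0 = a₀ < a 1 < ⋯ < a (n+1) < b n < ⋯ < b 1 < b 0 = b₀`. -/
def ValidHistB (a₀ b₀ : ℝ) {n : ℕ} (a : Fin (n + 2) → ℝ) (b : Fin (n + 1) → ℝ) : Prop :=
  a 0 = a₀ ∧ b 0 = b₀ ∧ StrictMono a ∧ StrictAnti b ∧ a (Fin.last (n + 1)) < b (Fin.last n)

/-- A strategy for player B in the Cantor game on `[a₀, b₀]`:
functions `g n` producing the move `b (n+1)` from the history
`(a 0, b 0, …, a n, b n, a (n+1))`, with `a (n+1) < g n a b < b n` on valid histories. -/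
structure StratB (a₀ b₀ : ℝ) where
  g : (n : ℕ) → (Fin (n + 2) → ℝ) → (Fin (n + 1) → ℝ) → ℝ
  valid : ∀ (n : ℕ) (a : Fin (n + 2) → ℝ) (b : Fin (n + 1) → ℝ), ValidHistB a₀ b₀ a b →
    a (Fin.last (n + 1)) < g n a b ∧ g n a b < b (Fin.last n)

/-- A play of the Cantor game on `[a₀, b₀]`:
`a (n-1) < a n < b n < b (n-1)` for all `n ≥ 1`. -/
def IsPlay (a₀ b₀ : ℝ) (a b : ℕ → ℝ) : Prop :=
  a 0 = a₀ ∧ b 0 = b₀ ∧ ∀ n : ℕ, a n < a (n + 1) ∧ a (n + 1) < b (n + 1) ∧ b (n + 1) < b n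

/-- A play is consistent with a strategy for A if each of A's moves is given by
the strategy applied to the preceding history. -/
def ConsistentA {a₀ b₀ : ℝ} (σ : StratA a₀ b₀) (a b : ℕ → ℝ) : Prop :=
  ∀ n : ℕ, a (n + 1) = σ.f n (fun i : Fin (n + 1) => a i) (fun i : Fin (n + 1) => b i)

/-- A play is consistent with a strategy for B if each of B's moves is given by
the strategy applied to the preceding history. -/
def ConsistentB {a₀ b₀ : ℝ} (σ : StratB a₀ b₀) (a b : ℕ → ℝ) : Prop :=
  ∀ n : ℕ, b (n + 1) = σ.g n (fun i : Fin (n + 2) => a i) (fun i : Fin (n + 1) => b i)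

/-- The limit set of a strategy for player A: all limits `lim aₙ` over plays
consistent with the strategy. -/
def limitSetA {a₀ b₀ : ℝ} (σ : StratA a₀ b₀) : Set ℝ :=
  {x | ∃ a b : ℕ → ℝ, IsPlay a₀ b₀ a b ∧ ConsistentA σ a b ∧
    Filter.Tendsto a Filter.atTop (nhds x)}

/-- The limit set of a strategy for player B: all limits `lim aₙ` over plays
consistent with the strategy. -/
def limitSetB {a₀ b₀ : ℝ} (σ : StratB a₀ b₀) : Set ℝ :=
  {x | ∃ a b : ℕ → ℝ, IsPlay a₀ b₀ a b ∧ ConsistentB σ a b ∧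
    Filter.Tendsto a Filter.atTop (nhds x)}

/-- A strategy for A is winning for target set `S` iff its limit set lies in `S`. -/
def WinningA {a₀ b₀ : ℝ} (σ : StratA a₀ b₀) (S : Set ℝ) : Prop := limitSetA σ ⊆ S

/-- A strategy for B is winning for target set `S` iff its limit set lies in
`[a₀, b₀] − S`. -/
def WinningB {a₀ b₀ : ℝ} (σ : StratB a₀ b₀) (S : Set ℝ) : Prop :=
  limitSetB σ ⊆ Set.Icc a₀ b₀ \ S

/-- `B` is a Bernstein set in `X ⊆ ℝ` (with its subspace topology) if `B ⊆ X` and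
neither `B` nor `X − B` contains a set that is uncountable and closed in `X`. -/
def IsBernsteinIn (X B : Set ℝ) : Prop :=
  B ⊆ X ∧
    (¬ ∃ T : Set ℝ, T ⊆ B ∧ ¬ T.Countable ∧ IsClosed (Subtype.val ⁻¹' T : Set X)) ∧
    (¬ ∃ T : Set ℝ, T ⊆ X \ B ∧ ¬ T.Countable ∧ IsClosed (Subtype.val ⁻¹' T : Set X))

/-- The set of right condensation points of `S` in `[a₀, b₀]`. -/
def rightCondPts (a₀ b₀ : ℝ) (S : Set ℝ) : Set ℝ :=
  {x ∈ Set.Icc a₀ b₀ | ∀ ε > 0, ¬ (Set.Ioo x (x + ε) ∩ S).Countable}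


namespace Stmt4Aux

variable {a₀ b₀ : ℝ}

/-- A's next move given a history of length `n+1` (as `ℕ`-indexed functions). -/
noncomputable def nextA (σ : StratA a₀ b₀) (n : ℕ) (a b : ℕ → ℝ) : ℝ :=
  σ.f n (fun i : Fin (n + 1) => a i) (fun i : Fin (n + 1) => b i)

/-- The extended `a`-sequence after A's move. -/
noncomputable def stepA (σ : StratA a₀ b₀) (n : ℕ) (a b : ℕ → ℝ) : ℕ → ℝ :=
  fun k => if k ≤ n then a k else nextA σ n a b

/-- B's response in branch 1: midpoint of `(aₙ₊₁, bₙ)`. -/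
noncomputable def t1 (σ : StratA a₀ b₀) (n : ℕ) (a b : ℕ → ℝ) : ℝ :=
  (nextA σ n a b + b n) / 2

noncomputable def stepB1 (σ : StratA a₀ b₀) (n : ℕ) (a b : ℕ → ℝ) : ℕ → ℝ :=
  fun k => if k ≤ n then b k else t1 σ n a b

/-- B's response in branch 0: midpoint of `(aₙ₊₁, A's reply in branch 1)`. -/
noncomputable def t0 (σ : StratA a₀ b₀) (n : ℕ) (a b : ℕ → ℝ) : ℝ :=
  (nextA σ n a b + nextA σ (n + 1) (stepA σ n a b) (stepB1 σ n a b)) / 2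

/-- The position after the rounds encoded by the (reversed) list of B's bits. -/
noncomputable def pos (σ : StratA a₀ b₀) : List Bool → (ℕ → ℝ) × (ℕ → ℝ)
  | [] => (fun _ => a₀, fun _ => b₀)
  | (i :: r) =>
      (stepA σ r.length (pos σ r).1 (pos σ r).2,
       fun k => if k ≤ r.length then (pos σ r).2 k else
         if i then t1 σ r.length (pos σ r).1 (pos σ r).2
         else t0 σ r.length (pos σ r).1 (pos σ r).2)

noncomputable def aN (σ : StratA a₀ b₀) (r : List Bool) : ℝ :=
  nextA σ r.length (pos σ r).1 (pos σ r).2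

noncomputable def dI (σ : StratA a₀ b₀) (r : List Bool) : ℝ :=
  (pos σ r).2 r.length

lemma pos_fst_le (σ : StratA a₀ b₀) (i : Bool) (r : List Bool) {k : ℕ}
    (hk : k ≤ r.length) : (pos σ (i :: r)).1 k = (pos σ r).1 k := by
  simp [pos, stepA, hk]

lemma pos_snd_le (σ : StratA a₀ b₀) (i : Bool) (r : List Bool) {k : ℕ}
    (hk : k ≤ r.length) : (pos σ (i :: r)).2 k = (pos σ r).2 k := by
  simp [pos, hk]

lemma pos_fst_gt (σ : StratA a₀ b₀) (i : Bool) (r : List Bool) {k : ℕ}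
    (hk : r.length < k) : (pos σ (i :: r)).1 k = aN σ r := by
  simp [pos, stepA, aN, Nat.not_le.mpr hk]

lemma pos_snd_gt (σ : StratA a₀ b₀) (i : Bool) (r : List Bool) {k : ℕ}
    (hk : r.length < k) : (pos σ (i :: r)).2 k =
      if i then t1 σ r.length (pos σ r).1 (pos σ r).2
      else t0 σ r.length (pos σ r).1 (pos σ r).2 := by
  simp [pos, Nat.not_le.mpr hk]

lemma pos_snd_true (σ : StratA a₀ b₀) (r : List Bool) :
    (pos σ (true :: r)).2 = stepB1 σ r.length (pos σ r).1 (pos σ r).2 := by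
  funext k
  by_cases hk : k ≤ r.length
  · simp [pos, stepB1, hk]
  · simp [pos, stepB1, hk]

lemma pos_fst_cons (σ : StratA a₀ b₀) (i : Bool) (r : List Bool) :
    (pos σ (i :: r)).1 = stepA σ r.length (pos σ r).1 (pos σ r).2 := rfl
lemma extend_valid (σ : StratA a₀ b₀) (n : ℕ) (a b b' : ℕ → ℝ)
    (h : ValidHistA a₀ b₀ (fun i : Fin (n + 1) => a i) (fun i : Fin (n + 1) => b i))
    (t : ℝ) (ht1 : nextA σ n a b < t) (ht2 : t < b n)
    (hb : ∀ k, k ≤ n → b' k = b k) (hb' : b' (n + 1) = t) :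
    ValidHistA a₀ b₀ (fun i : Fin (n + 2) => stepA σ n a b i) (fun i : Fin (n + 2) => b' i) := by
  obtain ⟨h1, h2, h3, h4, h5⟩ := h
  have hint := σ.valid n _ _ ⟨h1, h2, h3, h4, h5⟩
  have hαl : a n < nextA σ n a b := by
    simpa [nextA, Fin.val_last] using hint.1
  have hmono : ∀ k, k ≤ n → a k ≤ a n := by
    intro k hk
    have := h3.monotone (a := (⟨k, by omega⟩ : Fin (n + 1))) (b := ⟨n, by omega⟩) hk
    simpa using this
  have hanti : ∀ k, k ≤ n → b n ≤ b k := by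
    intro k hk
    have := h4.antitone (a := (⟨k, by omega⟩ : Fin (n + 1))) (b := ⟨n, by omega⟩) hk
    simpa using this
  refine ⟨?_, ?_, ?_, ?_, ?_⟩
  · show stepA σ n a b ((0 : Fin (n+2)) : ℕ) = a₀
    simp only [Fin.val_zero, stepA, Nat.zero_le, if_pos]
    simpa using h1
  · show b' ((0 : Fin (n+2)) : ℕ) = b₀
    rw [Fin.val_zero, hb 0 (Nat.zero_le n)]
    simpa using h2
  · intro i j hij
    by_cases hj : (j : ℕ) ≤ n
    · have hi : (i : ℕ) ≤ n := by omega
      simp only [stepA, if_pos hi, if_pos hj]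
      have := h3 (a := (⟨i, by omega⟩ : Fin (n + 1))) (b := ⟨j, by omega⟩)
        (by simpa using (show (i:ℕ) < j from hij))
      simpa using this
    · have hj' : (j : ℕ) = n + 1 := by omega
      have hi : (i : ℕ) ≤ n := by omega
      simp only [stepA, if_pos hi, hj', if_neg (by omega : ¬ n + 1 ≤ n)]
      exact lt_of_le_of_lt (hmono i hi) hαl
  · intro i j hij
    by_cases hj : (j : ℕ) ≤ n
    · have hi : (i : ℕ) ≤ n := by omega
      simp only [hb _ hi, hb _ hj]
      have := h4 (a := (⟨i, by omega⟩ : Fin (n + 1))) (b := ⟨j, by omega⟩)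
        (by simpa using (show (i:ℕ) < j from hij))
      simpa using this
    · have hj' : (j : ℕ) = n + 1 := by omega
      have hi : (i : ℕ) ≤ n := by omega
      simp only [hb _ hi, hj', hb']
      exact lt_of_lt_of_le ht2 (hanti i hi)
  · show stepA σ n a b ((Fin.last (n+1) : Fin (n+2)) : ℕ) < b' ((Fin.last (n+1) : Fin (n+2)) : ℕ)
    simp only [Fin.val_last, stepA, if_neg (by omega : ¬ n + 1 ≤ n), hb']
    exact ht1

lemma valid_pos (hab : a₀ < b₀) (σ : StratA a₀ b₀) : ∀ r : List Bool,
    ValidHistA a₀ b₀ (fun i : Fin (r.length + 1) => (pos σ r).1 i)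
      (fun i : Fin (r.length + 1) => (pos σ r).2 i) := by
  intro r
  induction r with
  | nil =>
      refine ⟨rfl, rfl, ?_, ?_, ?_⟩
      · intro i j hij
        have h1 : (j : ℕ) < 1 := by simpa using j.isLt
        have h2 : (i : ℕ) < (j : ℕ) := hij
        omega
      · intro i j hij
        have h1 : (j : ℕ) < 1 := by simpa using j.isLt
        have h2 : (i : ℕ) < (j : ℕ) := hij
        omega
      · exact hab
  | cons i r ih =>
      set n := r.length with hn
      have hmem := σ.valid n _ _ ih
      have hα : (pos σ r).1 n < nextA σ n (pos σ r).1 (pos σ r).2 ∧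
          nextA σ n (pos σ r).1 (pos σ r).2 < (pos σ r).2 n := by
        constructor
        · simpa [nextA, Fin.val_last] using hmem.1
        · simpa [nextA, Fin.val_last] using hmem.2
      have ht1a : nextA σ n (pos σ r).1 (pos σ r).2 < t1 σ n (pos σ r).1 (pos σ r).2 := by
        have := hα.2; unfold t1; linarith
      have ht1b : t1 σ n (pos σ r).1 (pos σ r).2 < (pos σ r).2 n := by
        have := hα.2; unfold t1; linarith
      -- validity of the branch-1 extension
      have hv1 : ValidHistA a₀ b₀ (fun i : Fin (n + 2) => stepA σ n (pos σ r).1 (pos σ r).2 i)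
          (fun i : Fin (n + 2) => stepB1 σ n (pos σ r).1 (pos σ r).2 i) :=
        extend_valid σ n _ _ _ ih _ ht1a ht1b
          (fun k hk => by simp [stepB1, hk]) (by simp [stepB1])
      -- bounds for A's reply in branch 1
      have hmem1 := σ.valid (n + 1) _ _ hv1
      have hα' : nextA σ n (pos σ r).1 (pos σ r).2 <
          nextA σ (n + 1) (stepA σ n (pos σ r).1 (pos σ r).2)
            (stepB1 σ n (pos σ r).1 (pos σ r).2) := by
        have := hmem1.1
        simpa [nextA, stepA, Fin.val_last] using this
      have hα'2 : nextA σ (n + 1) (stepA σ n (pos σ r).1 (pos σ r).2)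
            (stepB1 σ n (pos σ r).1 (pos σ r).2) < t1 σ n (pos σ r).1 (pos σ r).2 := by
        have := hmem1.2
        simpa [nextA, stepB1, Fin.val_last] using this
      cases i with
      | true =>
          have h := hv1
          rw [← pos_fst_cons σ true r, ← pos_snd_true σ r] at h
          exact h
      | false =>
          have ht0a : nextA σ n (pos σ r).1 (pos σ r).2 <
              t0 σ n (pos σ r).1 (pos σ r).2 := by
            unfold t0; linarith
          have ht0b : t0 σ n (pos σ r).1 (pos σ r).2 < (pos σ r).2 n := by
            have := hα.2
            unfold t0; unfold t1 at ht1b hα'2; linarith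
          have h := extend_valid σ n (pos σ r).1 (pos σ r).2 (pos σ (false :: r)).2 ih
            (t0 σ n (pos σ r).1 (pos σ r).2) ht0a ht0b
            (fun k hk => pos_snd_le σ false r hk)
            (by rw [pos_snd_gt σ false r (by omega)]; simp; rfl)
          exact ⟨h.1, h.2.1, h.2.2.1, h.2.2.2.1, h.2.2.2.2⟩

lemma aN_bounds (hab : a₀ < b₀) (σ : StratA a₀ b₀) (r : List Bool) :
    (pos σ r).1 r.length < aN σ r ∧ aN σ r < dI σ r := by
  have hmem := σ.valid r.length _ _ (valid_pos hab σ r)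
  constructor
  · simpa [aN, nextA, Fin.val_last] using hmem.1
  · simpa [aN, dI, nextA, Fin.val_last] using hmem.2

lemma aN_lt_dI (hab : a₀ < b₀) (σ : StratA a₀ b₀) (r : List Bool) :
    aN σ r < dI σ r := (aN_bounds hab σ r).2

lemma dI_cons_true (σ : StratA a₀ b₀) (r : List Bool) :
    dI σ (true :: r) = (aN σ r + dI σ r) / 2 := by
  show (pos σ (true :: r)).2 (r.length + 1) = _
  rw [pos_snd_gt σ true r (by omega)]
  simp [t1, aN, dI]

lemma dI_cons_false (σ : StratA a₀ b₀) (r : List Bool) :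
    dI σ (false :: r) = (aN σ r + aN σ (true :: r)) / 2 := by
  show (pos σ (false :: r)).2 (r.length + 1) = _
  rw [pos_snd_gt σ false r (by omega)]
  simp only [if_neg Bool.false_ne_true, t0, aN, pos_fst_cons, pos_snd_true]
  rfl

lemma aN_cons_gt (hab : a₀ < b₀) (σ : StratA a₀ b₀) (i : Bool) (r : List Bool) :
    aN σ r < aN σ (i :: r) := by
  have h := (aN_bounds hab σ (i :: r)).1
  rwa [show ((i :: r) : List Bool).length = r.length + 1 from rfl,
    pos_fst_gt σ i r (by omega)] at h

lemma dI_false_lt_aN_true (hab : a₀ < b₀) (σ : StratA a₀ b₀) (r : List Bool) :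
    dI σ (false :: r) < aN σ (true :: r) := by
  rw [dI_cons_false]
  have := aN_cons_gt hab σ true r
  linarith

lemma dI_cons_lt (hab : a₀ < b₀) (σ : StratA a₀ b₀) (i : Bool) (r : List Bool) :
    dI σ (i :: r) < dI σ r := by
  have h1 := aN_lt_dI hab σ r
  cases i
  · have h2 := dI_false_lt_aN_true hab σ r
    have h3 := aN_lt_dI hab σ (true :: r)
    rw [dI_cons_true] at h3
    linarith
  · rw [dI_cons_true]; linarith

lemma child_sub (hab : a₀ < b₀) (σ : StratA a₀ b₀) (i : Bool) (r : List Bool) :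
    Set.Icc (aN σ (i :: r)) (dI σ (i :: r)) ⊆ Set.Icc (aN σ r) (dI σ r) :=
  Set.Icc_subset_Icc (aN_cons_gt hab σ i r).le (dI_cons_lt hab σ i r).le

lemma diam_bound (hab : a₀ < b₀) (σ : StratA a₀ b₀) : ∀ r : List Bool,
    dI σ r - aN σ r < (b₀ - a₀) / 2 ^ r.length := by
  intro r
  induction r with
  | nil =>
      have h1 := (aN_bounds hab σ []).1
      have h2 : (pos σ ([] : List Bool)).1 0 = a₀ := rfl
      have h3 : dI σ ([] : List Bool) = b₀ := rfl
      simp only [List.length_nil] at h1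
      rw [h2] at h1
      simp only [List.length_nil, pow_zero]
      rw [h3]
      linarith
  | cons i r ih =>
      have hg := aN_cons_gt hab σ i r
      have key : dI σ (i :: r) ≤ (aN σ r + dI σ r) / 2 := by
        cases i
        · rw [dI_cons_false]
          have h3 := aN_lt_dI hab σ (true :: r)
          have h4 := aN_lt_dI hab σ r
          rw [dI_cons_true] at h3
          linarith
        · rw [dI_cons_true]
      have hlen : ((i :: r) : List Bool).length = r.length + 1 := rfl
      rw [hlen, pow_succ]
      have hpow : (0:ℝ) < 2 ^ r.length := by positivity
      have : dI σ (i :: r) - aN σ (i :: r) < (dI σ r - aN σ r) / 2 := by linarith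
      calc dI σ (i :: r) - aN σ (i :: r) < (dI σ r - aN σ r) / 2 := this
        _ < ((b₀ - a₀) / 2 ^ r.length) / 2 := by linarith
        _ = (b₀ - a₀) / (2 ^ r.length * 2) := by ring

lemma level_disj (hab : a₀ < b₀) (σ : StratA a₀ b₀) : ∀ (r r' : List Bool),
    r.length = r'.length → r ≠ r' → ∀ x : ℝ,
    x ∈ Set.Icc (aN σ r) (dI σ r) → x ∈ Set.Icc (aN σ r') (dI σ r') → False := by
  intro r
  induction r with
  | nil =>
      intro r' hlen hne x _ _
      exact hne (by cases r' with
        | nil => rfl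
        | cons j s => simp at hlen)
  | cons i s ih =>
      intro r' hlen hne x hx hx'
      cases r' with
      | nil => simp at hlen
      | cons i' s' =>
          by_cases hs : s = s'
          · subst hs
            have hii : i ≠ i' := fun h => hne (by rw [h])
            have key : ∀ y : ℝ, y ∈ Set.Icc (aN σ (false :: s)) (dI σ (false :: s)) →
                y ∈ Set.Icc (aN σ (true :: s)) (dI σ (true :: s)) → False := by
              intro y h0 h1
              have := dI_false_lt_aN_true hab σ s
              have := h0.2
              have := h1.1
              linarith
            cases i <;> cases i'
            · exact absurd rfl hii
            · exact key x hx hx'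
            · exact key x hx' hx
            · exact absurd rfl hii
          · have hlen' : s.length = s'.length := by simpa using hlen
            exact ih s' hlen' hs x (child_sub hab σ i s hx) (child_sub hab σ i' s' hx')

lemma pos_chain_agree (σ : StratA a₀ b₀) (R : ℕ → List Bool)
    (hlen : ∀ n, (R n).length = n) (hchain : ∀ n, ∃ j, R (n + 1) = j :: R n) :
    ∀ d n k, k ≤ n →
      (pos σ (R (n + d))).1 k = (pos σ (R n)).1 k ∧
      (pos σ (R (n + d))).2 k = (pos σ (R n)).2 k := by
  intro d
  induction d with
  | zero => intro n k _; exact ⟨rfl, rfl⟩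
  | succ d ih =>
      intro n k hk
      obtain ⟨j, hj⟩ := hchain (n + d)
      have hk' : k ≤ (R (n + d)).length := by rw [hlen]; omega
      constructor
      · rw [show n + (d + 1) = (n + d) + 1 from rfl, hj, pos_fst_le σ j _ hk', (ih n k hk).1]
      · rw [show n + (d + 1) = (n + d) + 1 from rfl, hj, pos_snd_le σ j _ hk', (ih n k hk).2]

lemma aN_root_gt (hab : a₀ < b₀) (σ : StratA a₀ b₀) : a₀ < aN σ [] := by
  have := (aN_bounds hab σ []).1
  exact this

/-- The generalized Cantor set data built from σ. -/
noncomputable def game2cantor (hab : a₀ < b₀) (σ : StratA a₀ b₀) : GenCantor where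
  lo := a₀
  hi := b₀
  lo_lt_hi := hab
  e := fun n => (b₀ - a₀) / 2 ^ n
  e_pos := fun n => div_pos (by linarith) (by positivity)
  e_anti := by
    intro m n h
    exact div_lt_div_of_pos_left (by linarith) (by positivity)
      (pow_lt_pow_right₀ one_lt_two h)
  e_lim := by
    have h := tendsto_pow_atTop_nhds_zero_of_lt_one
      (by norm_num : (0:ℝ) ≤ 1/2) (by norm_num : (1:ℝ)/2 < 1)
    have h2 := h.const_mul (b₀ - a₀)
    simp only [mul_zero] at h2
    convert h2 using 2 with n
    rw [div_eq_mul_inv, one_div, inv_pow]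
  c := fun l => aN σ l.reverse
  d := fun l => dI σ l.reverse
  diam_pos := fun l _ => sub_pos.mpr (aN_lt_dI hab σ l.reverse)
  diam_lt := fun l _ => by
    have := diam_bound hab σ l.reverse
    rwa [List.length_reverse] at this
  root_sub := fun i => by
    have h1 : Set.Icc (aN σ [i]) (dI σ [i]) ⊆ Set.Icc (aN σ []) (dI σ []) :=
      child_sub hab σ i []
    have h2 : Set.Icc (aN σ ([] : List Bool)) (dI σ ([] : List Bool)) ⊆ Set.Icc a₀ b₀ := by
      apply Set.Icc_subset_Icc (aN_root_gt hab σ).le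
      exact le_of_eq rfl
    exact fun x hx => h2 (h1 hx)
  nested := fun l _ i => by
    have hrev : (l ++ [i]).reverse = i :: l.reverse := by simp
    simp only [hrev]
    exact child_sub hab σ i l.reverse
  disj := fun l => by
    have h0 : (l ++ [false]).reverse = false :: l.reverse := by simp
    have h1 : (l ++ [true]).reverse = true :: l.reverse := by simp
    simp only [h0, h1]
    apply Set.eq_empty_iff_forall_notMem.mpr
    rintro x ⟨hx0, hx1⟩
    have := dI_false_lt_aN_true hab σ l.reverse
    have := hx0.2
    have := hx1.1
    linarith

lemma cantor_sub_limit (hab : a₀ < b₀) (σ : StratA a₀ b₀) :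
    (game2cantor hab σ).C ⊆ limitSetA σ := by
  intro x hx
  -- for each n there is a (reversed) index list of length n whose interval contains x
  have hmem : ∀ n : ℕ, ∃ r : List Bool, r.length = n ∧
      x ∈ Set.Icc (aN σ r) (dI σ r) := by
    intro n
    have hx' := Set.mem_iInter.mp hx n
    simp only [Set.mem_iUnion, Set.mem_setOf_eq] at hx'
    obtain ⟨l, hl, hxl⟩ := hx'
    have hne : l.reverse ≠ [] := by
      intro h
      have := congrArg List.length h
      simp [hl] at this
    obtain ⟨j, s, hjs⟩ := List.exists_cons_of_ne_nil hne
    refine ⟨s, ?_, ?_⟩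
    · have := congrArg List.length hjs
      simp [hl] at this
      omega
    · have : x ∈ Set.Icc (aN σ (j :: s)) (dI σ (j :: s)) := by rw [← hjs]; exact hxl
      exact child_sub hab σ j s this
  choose R hlenR hmemR using hmem
  -- the chosen lists form a chain
  have hchain : ∀ n, ∃ j, R (n + 1) = j :: R n := by
    intro n
    have h1 : (R (n + 1)).length = n + 1 := hlenR (n + 1)
    obtain ⟨j, s, hjs⟩ := List.exists_cons_of_ne_nil
      (show R (n + 1) ≠ [] by intro h; rw [h] at h1; simp at h1)
    have hslen : s.length = n := by
      have := congrArg List.length hjs; rw [h1] at this; simpa using this.symm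
    have hxs : x ∈ Set.Icc (aN σ s) (dI σ s) := by
      have := hmemR (n + 1); rw [hjs] at this
      exact child_sub hab σ j s this
    have hseq : s = R n := by
      by_contra hne
      exact level_disj hab σ s (R n) (by rw [hslen, hlenR]) hne x hxs (hmemR n)
    exact ⟨j, by rw [hjs, hseq]⟩
  -- the play
  set a : ℕ → ℝ := fun n => (pos σ (R n)).1 n with ha
  set b : ℕ → ℝ := fun n => (pos σ (R n)).2 n with hb
  have hR0 : R 0 = [] := List.length_eq_zero_iff.mp (hlenR 0)
  have hagree : ∀ m n k, k ≤ n → n ≤ m →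
      (pos σ (R m)).1 k = (pos σ (R n)).1 k ∧
      (pos σ (R m)).2 k = (pos σ (R n)).2 k := by
    intro m n k hk hnm
    have := pos_chain_agree σ R hlenR hchain (m - n) n k hk
    rwa [show n + (m - n) = m by omega] at this
  have haN : ∀ n, a (n + 1) = aN σ (R n) := by
    intro n
    obtain ⟨j, hj⟩ := hchain n
    show (pos σ (R (n + 1))).1 (n + 1) = _
    rw [hj, pos_fst_gt σ j (R n) (by rw [hlenR]; omega)]
  have hdI : ∀ n, b n = dI σ (R n) := by
    intro n
    show (pos σ (R n)).2 n = (pos σ (R n)).2 (R n).length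
    rw [hlenR]
  have hbx : ∀ n, aN σ (R n) ≤ x ∧ x ≤ dI σ (R n) := fun n => hmemR n
  -- it is a play
  have hvalid := fun n => valid_pos hab σ (R n)
  have hplay : IsPlay a₀ b₀ a b := by
    refine ⟨?_, ?_, ?_⟩
    · show (pos σ (R 0)).1 0 = a₀; rw [hR0]; rfl
    · show (pos σ (R 0)).2 0 = b₀; rw [hR0]; rfl
    · intro n
      obtain ⟨j, hj⟩ := hchain n
      refine ⟨?_, ?_, ?_⟩
      · -- a n < a (n+1)
        rw [haN n]
        have h1 := (aN_bounds hab σ (R n)).1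
        have h2 : (pos σ (R n)).1 (R n).length = a n := by rw [hlenR]
        rw [h2] at h1; exact h1
      · -- a (n+1) < b (n+1)
        rw [haN n, hdI (n + 1)]
        have h1 := (aN_bounds hab σ (R (n + 1))).1
        have h2 := aN_lt_dI hab σ (R (n + 1))
        have h3 : (pos σ (R (n + 1))).1 (R (n + 1)).length = aN σ (R n) := by
          rw [hlenR, hj, pos_fst_gt σ j (R n) (by rw [hlenR]; omega)]
        rw [h3] at h1
        linarith
      · -- b (n+1) < b n
        rw [hdI (n + 1), hdI n, hj]
        exact dI_cons_lt hab σ j (R n)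
  -- consistency
  have hcons : ConsistentA σ a b := by
    intro n
    rw [haN n]
    show aN σ (R n) = σ.f n (fun i : Fin (n + 1) => a i) (fun i : Fin (n + 1) => b i)
    unfold aN
    rw [hlenR n]
    unfold nextA
    congr 1
    · funext i
      exact (hagree n i i le_rfl (by omega)).1
    · funext i
      exact (hagree n i i le_rfl (by omega)).2
  -- the limit is x
  have htend : Filter.Tendsto a Filter.atTop (nhds x) := by
    rw [← Filter.tendsto_add_atTop_iff_nat 1]
    apply tendsto_of_tendsto_of_tendsto_of_le_of_le
      (g := fun n : ℕ => x - (b₀ - a₀) / 2 ^ n) (h := fun _ : ℕ => x)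
    · have h := tendsto_pow_atTop_nhds_zero_of_lt_one
        (by norm_num : (0:ℝ) ≤ 1/2) (by norm_num : (1:ℝ)/2 < 1)
      have h2 := (h.const_mul (b₀ - a₀)).const_sub x
      simp only [mul_zero, sub_zero] at h2
      convert h2 using 2 with n
      rw [div_eq_mul_inv, one_div, inv_pow]
    · exact tendsto_const_nhds
    · intro n
      show x - (b₀ - a₀) / 2 ^ n ≤ a (n + 1)
      have hd := diam_bound hab σ (R n)
      rw [hlenR n] at hd
      have h1 := (hbx n).2
      have h2 := (hbx n).1
      rw [haN n]
      linarith
    · intro n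
      show a (n + 1) ≤ x
      rw [haN n]
      exact (hbx n).1
  exact ⟨a, b, hplay, hcons, htend⟩


end Stmt4Aux

/-- In the Cantor game on `[a₀, b₀]` with an uncountable target set,
the limit set of any strategy for player A contains a generalized Cantor set. -/
theorem stmt4 (a₀ b₀ : ℝ) (hab : a₀ < b₀) (S : Set ℝ) (hS : S ⊆ Set.Icc a₀ b₀)
    (hSunc : ¬ S.Countable) (σ : StratA a₀ b₀) :
    ∃ C : Set ℝ, IsGenCantorSet C ∧ C ⊆ limitSetA σ :=
  ⟨(Stmt4Aux.game2cantor hab σ).C, ⟨Stmt4Aux.game2cantor hab σ, rfl⟩,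
    Stmt4Aux.cantor_sub_limit hab σ⟩
end

section
/- In the Cantor game on [a₀, b₀] with an uncountable target set S ⊆ [a₀, b₀], the following three statements are equivalent: (1) player A has a winning strategy; (2) S contains a generalized Cantor set; (3) S contains a nonempty perfect set. -/
open Filter Set

namespace GenCantor
variable (G : GenCantor)

lemma c_lt_d (l : List Bool) (h : l ≠ []) : G.c l < G.d l := by linarith [G.diam_pos l h]

lemma chain (l t : List Bool) (h : l ≠ []) :
    Icc (G.c (l ++ t)) (G.d (l ++ t)) ⊆ Icc (G.c l) (G.d l) := by
  induction t using List.reverseRecOn with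
  | nil => simp
  | append_singleton t i ih =>
      rw [← List.append_assoc]
      exact (G.nested (l ++ t) (by simp [h]) i).trans ih

lemma mem_C_iff (x : ℝ) :
    x ∈ G.C ↔ ∀ n : ℕ, ∃ l : List Bool, l.length = n + 1 ∧ x ∈ Icc (G.c l) (G.d l) := by
  simp only [GenCantor.C, mem_iInter, mem_iUnion, mem_setOf_eq, exists_prop]

lemma meets (l : List Bool) (h : l ≠ []) : ∃ x ∈ G.C, x ∈ Icc (G.c l) (G.d l) := by
  set V : ℕ → Set ℝ := fun k => Icc (G.c (l ++ List.replicate k false))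
      (G.d (l ++ List.replicate k false)) with hV
  have hsub : ∀ k, V (k + 1) ⊆ V k := by
    intro k
    have : l ++ List.replicate (k + 1) false = (l ++ List.replicate k false) ++ [false] := by
      rw [List.replicate_succ', List.append_assoc]
    rw [hV]; dsimp only; rw [this]
    exact G.nested _ (by simp [h]) false
  have hne : ∀ k, (V k).Nonempty := fun k =>
    nonempty_Icc.2 (le_of_lt (G.c_lt_d _ (by simp [h])))
  obtain ⟨x, hx⟩ := IsCompact.nonempty_iInter_of_sequence_nonempty_isCompact_isClosed V hsub hne
    isCompact_Icc (fun _ => isClosed_Icc)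
  have hxk : ∀ k, x ∈ V k := by
    intro k; exact mem_iInter.1 hx k
  have hx0 : x ∈ Icc (G.c l) (G.d l) := by
    have := hxk 0
    simpa only [hV, List.replicate_zero, List.append_nil] using this
  refine ⟨x, ?_, hx0⟩
  rw [G.mem_C_iff]
  intro n
  rcases le_or_gt (n + 1) l.length with hle | hlt
  · refine ⟨l.take (n + 1), by simp [hle], ?_⟩
    have h1 : l.take (n + 1) ≠ [] := by
      intro hh
      have := congrArg List.length hh
      simp [hle] at this
    have := G.chain (l.take (n + 1)) (l.drop (n + 1)) h1
    rw [List.take_append_drop] at this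
    exact this hx0
  · refine ⟨l ++ List.replicate (n + 1 - l.length) false, by simp; omega, hxk _⟩

lemma nonemptyC : G.C.Nonempty := by
  obtain ⟨x, hx, -⟩ := G.meets [false] (by simp)
  exact ⟨x, hx⟩

lemma closedC : IsClosed G.C :=
  isClosed_iInter fun n => (List.finite_length_eq Bool (n + 1)).isClosed_biUnion
    fun _ _ => isClosed_Icc

lemma levels_disj : ∀ (n : ℕ) (l₁ l₂ : List Bool), l₁.length = n → l₂.length = n →
    l₁ ≠ [] → l₁ ≠ l₂ →
    Icc (G.c l₁) (G.d l₁) ∩ Icc (G.c l₂) (G.d l₂) = ∅ := by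
  intro n
  induction n using Nat.strong_induction_on with
  | _ n IH =>
    intro l₁ l₂ h₁ h₂ hne hnee
    have hne₂ : l₂ ≠ [] := by
      intro hh; rw [hh] at h₂; simp at h₂; rw [← h₂] at h₁
      exact hne (List.eq_nil_of_length_eq_zero h₁)
    obtain ⟨m₁, j₁, rfl⟩ : ∃ m j, l₁ = m ++ [j] :=
      ⟨l₁.dropLast, l₁.getLast hne, (List.dropLast_append_getLast hne).symm⟩
    obtain ⟨m₂, j₂, rfl⟩ : ∃ m j, l₂ = m ++ [j] :=
      ⟨l₂.dropLast, l₂.getLast hne₂, (List.dropLast_append_getLast hne₂).symm⟩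
    by_cases hm : m₁ = m₂
    · subst hm
      have hj : j₁ ≠ j₂ := by intro hh; exact hnee (by rw [hh])
      cases j₁ <;> cases j₂ <;> first
        | exact absurd rfl hj
        | exact G.disj m₁
        | (rw [Set.inter_comm]; exact G.disj m₁)
    · have hlen : m₁.length = m₂.length := by
        simp at h₁ h₂; omega
      have hm₁ : m₁ ≠ [] := by
        intro hh
        apply hm
        rw [hh] at hlen ⊢
        simp at hlen
        first
          | exact hlen.symm
          | exact (List.eq_nil_of_length_eq_zero hlen.symm).symm
      have hm₂ : m₂ ≠ [] := by
        intro hh; rw [hh] at hlen; simp at hlen; first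
          | exact hm₁ hlen
          | exact hm₁ (List.eq_nil_of_length_eq_zero hlen)
      have hIH := IH m₁.length (by simp at h₁; omega) m₁ m₂ rfl hlen.symm hm₁ hm
      apply eq_empty_of_subset_empty
      rw [← hIH]
      exact inter_subset_inter (G.nested m₁ hm₁ j₁) (G.nested m₂ hm₂ j₂)

lemma exists_e_lt (ε : ℝ) (hε : 0 < ε) : ∃ n, G.e (n + 1) < ε := by
  have h := G.e_lim
  rw [Metric.tendsto_atTop] at h
  obtain ⟨N, hN⟩ := h ε hε
  refine ⟨N, ?_⟩
  have := hN (N + 1) (by omega)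
  rwa [Real.dist_eq, sub_zero, abs_of_pos (G.e_pos _)] at this

lemma perfectC : PerfectSet G.C := by
  refine ⟨G.closedC, ?_⟩
  intro x hx
  rw [Metric.mem_closure_iff]
  intro ε hε
  obtain ⟨n, hn⟩ := G.exists_e_lt ε hε
  obtain ⟨l, hlen, hxl⟩ := (G.mem_C_iff x).1 hx n
  have hl : l ≠ [] := by intro h; rw [h] at hlen; simp at hlen
  obtain ⟨i, hi⟩ : ∃ i : Bool, x ∉ Icc (G.c (l ++ [i])) (G.d (l ++ [i])) := by
    by_cases h0 : x ∈ Icc (G.c (l ++ [false])) (G.d (l ++ [false]))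
    · refine ⟨true, fun h1 => ?_⟩
      have hempty : x ∈ (∅ : Set ℝ) := by rw [← G.disj l]; exact ⟨h0, h1⟩
      exact hempty
    · exact ⟨false, h0⟩
  obtain ⟨y, hyC, hyl⟩ := G.meets (l ++ [i]) (by simp)
  have hy' : y ∈ Icc (G.c l) (G.d l) := G.nested l hl i hyl
  refine ⟨y, ⟨hyC, ?_⟩, ?_⟩
  · intro h
    rw [mem_singleton_iff] at h
    subst h
    exact hi hyl
  · have hd : G.d l - G.c l < ε := lt_trans (G.diam_lt l hl) (by rw [hlen]; exact hn)
    rw [Real.dist_eq, abs_sub_lt_iff]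
    constructor <;> linarith [hxl.1, hxl.2, hy'.1, hy'.2]

end GenCantor


section
variable (P : Set ℝ)

/-- Good triple: (c, d, x) with x ∈ P and c < x < d. -/
def GoodT (t : ℝ × ℝ × ℝ) : Prop := t.2.2 ∈ P ∧ t.1 < t.2.2 ∧ t.2.2 < t.2.1

lemma two_points (hP : ∀ x ∈ P, x ∈ closure (P \ {x})) (t : ℝ × ℝ × ℝ) (ht : GoodT P t) :
    ∃ y ∈ P, y ≠ t.2.2 ∧ t.1 < y ∧ y < t.2.1 := by
  obtain ⟨c, d, x⟩ := t
  obtain ⟨hx, h1, h2⟩ := ht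
  have hx' := hP x hx
  rw [Metric.mem_closure_iff] at hx'
  obtain ⟨y, ⟨hyP, hyx⟩, hd⟩ := hx' (min (x - c) (d - x)) (by simp; constructor <;> linarith)
  rw [mem_singleton_iff] at hyx
  rw [Real.dist_eq, abs_sub_lt_iff] at hd
  have e1 := hd.1
  have e2 := hd.2
  have m1 : min (x - c) (d - x) ≤ x - c := min_le_left _ _
  have m2 : min (x - c) (d - x) ≤ d - x := min_le_right _ _
  exact ⟨y, hyP, hyx, by simp only; linarith, by simp only; linarith⟩

lemma split_step (hP : ∀ x ∈ P, x ∈ closure (P \ {x})) (t : ℝ × ℝ × ℝ) (ht : GoodT P t) :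
    ∃ u v : ℝ × ℝ × ℝ, GoodT P u ∧ GoodT P v ∧
      (t.1 < u.1 ∧ u.2.1 < t.2.1) ∧ (t.1 < v.1 ∧ v.2.1 < t.2.1) ∧
      u.2.1 - u.1 < (t.2.1 - t.1) / 2 ∧ v.2.1 - v.1 < (t.2.1 - t.1) / 2 ∧
      Icc u.1 u.2.1 ∩ Icc v.1 v.2.1 = ∅ := by
  obtain ⟨y, hyP, hyx, hy1, hy2⟩ := two_points P hP t ht
  obtain ⟨c, d, x⟩ := t
  obtain ⟨hx, h1, h2⟩ := ht
  simp only at hx h1 h2 hyx hy1 hy2 ⊢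
  set r : ℝ := min (|x - y| / 3) (min ((x - c) / 2) (min ((d - x) / 2)
      (min ((y - c) / 2) (min ((d - y) / 2) ((d - c) / 8))))) with hr
  have hxy : 0 < |x - y| := abs_pos.mpr (sub_ne_zero.2 (fun h => hyx h.symm))
  have hrpos : 0 < r := by
    rw [hr]
    simp only [lt_min_iff]
    refine ⟨by first | linarith | (dsimp only; linarith), by first | linarith | (dsimp only; linarith), by first | linarith | (dsimp only; linarith), by first | linarith | (dsimp only; linarith), by first | linarith | (dsimp only; linarith), by first | linarith | (dsimp only; linarith)⟩
  have r1 : r ≤ |x - y| / 3 := min_le_left _ _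
  have r2 : r ≤ (x - c) / 2 := le_trans (min_le_right _ _) (min_le_left _ _)
  have r3 : r ≤ (d - x) / 2 :=
    le_trans (min_le_right _ _) (le_trans (min_le_right _ _) (min_le_left _ _))
  have r4 : r ≤ (y - c) / 2 := le_trans (min_le_right _ _) (le_trans (min_le_right _ _)
    (le_trans (min_le_right _ _) (min_le_left _ _)))
  have r5 : r ≤ (d - y) / 2 := le_trans (min_le_right _ _) (le_trans (min_le_right _ _)
    (le_trans (min_le_right _ _) (le_trans (min_le_right _ _) (min_le_left _ _))))
  have r6 : r ≤ (d - c) / 8 := le_trans (min_le_right _ _) (le_trans (min_le_right _ _)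
    (le_trans (min_le_right _ _) (le_trans (min_le_right _ _) (min_le_right _ _))))
  refine ⟨(x - r, x + r, x), (y - r, y + r, y), ⟨hx, by first | linarith | (dsimp only; linarith), by first | linarith | (dsimp only; linarith)⟩,
    ⟨hyP, by first | linarith | (dsimp only; linarith), by first | linarith | (dsimp only; linarith)⟩, ⟨by first | linarith | (dsimp only; linarith), by first | linarith | (dsimp only; linarith)⟩, ⟨by first | linarith | (dsimp only; linarith), by first | linarith | (dsimp only; linarith)⟩,
    by first | linarith | (dsimp only; linarith), by first | linarith | (dsimp only; linarith), ?_⟩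
  rw [Set.eq_empty_iff_forall_notMem]
  rintro z ⟨⟨hz1, hz2⟩, ⟨hz3, hz4⟩⟩
  simp only at hz1 hz2 hz3 hz4
  have : |x - y| ≤ 2 * r := by
    have b1 : |x - z| ≤ r := by rw [abs_sub_le_iff]; constructor <;> linarith
    have b2 : |z - y| ≤ r := by rw [abs_sub_le_iff]; constructor <;> linarith
    calc |x - y| ≤ |x - z| + |z - y| := abs_sub_le x z y
      _ ≤ 2 * r := by first | linarith | (dsimp only; linarith)
  linarith

end


lemma perfect_contains_genCantor (P : Set ℝ) (hne : P.Nonempty) (hP : PerfectSet P) :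
    ∃ G : GenCantor, G.C ⊆ P := by
  obtain ⟨x₀, hx₀⟩ := hne
  have key : ∀ t : ℝ × ℝ × ℝ, ∃ u v : ℝ × ℝ × ℝ, GoodT P t → (GoodT P u ∧ GoodT P v ∧
      (t.1 < u.1 ∧ u.2.1 < t.2.1) ∧ (t.1 < v.1 ∧ v.2.1 < t.2.1) ∧
      u.2.1 - u.1 < (t.2.1 - t.1) / 2 ∧ v.2.1 - v.1 < (t.2.1 - t.1) / 2 ∧
      Icc u.1 u.2.1 ∩ Icc v.1 v.2.1 = ∅) := by
    intro t
    by_cases ht : GoodT P t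
    · obtain ⟨u, v, hc⟩ := split_step P hP.2 t ht
      exact ⟨u, v, fun _ => hc⟩
    · exact ⟨t, t, fun h => absurd h ht⟩
  choose u v huv using key
  classical
  set stepf : ℝ × ℝ × ℝ → Bool → ℝ × ℝ × ℝ := fun t i => if i then v t else u t with hstepf
  set node : List Bool → ℝ × ℝ × ℝ := fun l => l.foldl stepf (x₀ - 1, x₀ + 1, x₀) with hnode
  have node_nil : node [] = (x₀ - 1, x₀ + 1, x₀) := rfl
  have node_app : ∀ (l : List Bool) (i : Bool), node (l ++ [i]) = stepf (node l) i := by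
    intro l i; simp [hnode]
  have good : ∀ l, GoodT P (node l) := by
    intro l
    induction l using List.reverseRecOn with
    | nil => exact ⟨by rw [node_nil]; exact hx₀, by rw [node_nil]; dsimp only; linarith,
        by rw [node_nil]; dsimp only; linarith⟩
    | append_singleton l i ih =>
        rw [node_app]
        have h := huv (node l) ih
        cases i
        · simpa [hstepf] using h.1
        · simpa [hstepf] using h.2.1
  have sub : ∀ (l : List Bool) (i : Bool),
      (node l).1 < (node (l ++ [i])).1 ∧ (node (l ++ [i])).2.1 < (node l).2.1 := by
    intro l i
    rw [node_app]
    have h := huv (node l) (good l)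
    cases i
    · simpa [hstepf] using h.2.2.1
    · simpa [hstepf] using h.2.2.2.1
  have small : ∀ (l : List Bool) (i : Bool),
      (node (l ++ [i])).2.1 - (node (l ++ [i])).1 < ((node l).2.1 - (node l).1) / 2 := by
    intro l i
    rw [node_app]
    have h := huv (node l) (good l)
    cases i
    · simpa [hstepf] using h.2.2.2.2.1
    · simpa [hstepf] using h.2.2.2.2.2.1
  have ddisj : ∀ l : List Bool,
      Icc (node (l ++ [false])).1 (node (l ++ [false])).2.1 ∩
        Icc (node (l ++ [true])).1 (node (l ++ [true])).2.1 = ∅ := by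
    intro l
    rw [node_app, node_app]
    have h := huv (node l) (good l)
    simpa [hstepf] using h.2.2.2.2.2.2
  have diam_le : ∀ l : List Bool, (node l).2.1 - (node l).1 ≤ 2 * (1/2 : ℝ) ^ l.length := by
    intro l
    induction l using List.reverseRecOn with
    | nil => rw [node_nil]; dsimp only; norm_num
    | append_singleton l i ih =>
        have h := small l i
        have hlen : (l ++ [i]).length = l.length + 1 := by simp
        rw [hlen, pow_succ]
        linarith
  refine ⟨⟨x₀ - 1, x₀ + 1, by linarith, fun n => 4 * (1/2) ^ n,
    fun n => by positivity, ?_, ?_,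
    fun l => (node l).1, fun l => (node l).2.1, ?_, ?_, ?_, ?_, ?_⟩, ?_⟩
  · intro a b h
    dsimp only
    have := pow_lt_pow_right_of_lt_one₀ (by norm_num : (0:ℝ) < 1/2) (by norm_num) h
    linarith
  · have := (tendsto_pow_atTop_nhds_zero_of_lt_one
      (by norm_num : (0:ℝ) ≤ 1/2) (by norm_num)).const_mul (4:ℝ)
    simpa using this
  · intro l _
    have h := good l
    obtain ⟨_, h1, h2⟩ := h
    linarith
  · intro l hl
    obtain ⟨m, j, rfl⟩ : ∃ m j, l = m ++ [j] :=
      ⟨l.dropLast, l.getLast hl, (List.dropLast_append_getLast hl).symm⟩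
    have h1 := small m j
    have h2 := diam_le m
    have h3 : (0:ℝ) < (1/2) ^ m.length := by positivity
    have hlen : (m ++ [j]).length = m.length + 1 := by simp
    rw [hlen, pow_succ]
    linarith
  · intro i
    have h := sub [] i
    rw [node_nil] at h
    dsimp only at h ⊢
    exact Icc_subset_Icc h.1.le h.2.le
  · intro l _ i
    exact Icc_subset_Icc (sub l i).1.le (sub l i).2.le
  · intro l
    exact ddisj l
  · intro z hz
    have hclo : z ∈ closure P := by
      rw [Metric.mem_closure_iff]
      intro ε hε
      obtain ⟨n, hn⟩ : ∃ n : ℕ, (1/2:ℝ) ^ n < ε / 2 :=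
        exists_pow_lt_of_lt_one (by linarith) (by norm_num)
      rw [GenCantor.mem_C_iff] at hz
      obtain ⟨l, hlen, hzl⟩ := hz n
      dsimp only at hzl
      refine ⟨(node l).2.2, (good l).1, ?_⟩
      obtain ⟨-, g1, g2⟩ := good l
      have hd : (node l).2.1 - (node l).1 ≤ 2 * (1/2:ℝ) ^ (n+1) := by
        rw [← hlen]; exact diam_le l
      have : (2:ℝ) * (1/2) ^ (n+1) = (1/2) ^ n := by rw [pow_succ]; ring
      rw [this] at hd
      rw [Real.dist_eq, abs_sub_lt_iff]
      constructor <;> linarith [hzl.1, hzl.2]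
    rwa [hP.1.closure_eq] at hclo


namespace GenCantor
variable (G : GenCantor)

noncomputable def Lchild (l : List Bool) : List Bool :=
  if G.c (l ++ [false]) ≤ G.c (l ++ [true]) then l ++ [false] else l ++ [true]

noncomputable def Rchild (l : List Bool) : List Bool :=
  if G.c (l ++ [false]) ≤ G.c (l ++ [true]) then l ++ [true] else l ++ [false]

lemma Lchild_eq (l : List Bool) : ∃ i : Bool, G.Lchild l = l ++ [i] := by
  unfold Lchild; split
  · exact ⟨false, rfl⟩
  · exact ⟨true, rfl⟩

lemma Rchild_eq (l : List Bool) : ∃ i : Bool, G.Rchild l = l ++ [i] := by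
  unfold Rchild; split
  · exact ⟨true, rfl⟩
  · exact ⟨false, rfl⟩

lemma sep (l : List Bool) (z : ℝ) (hz : z ∈ Icc (G.c (G.Lchild l)) (G.d (G.Lchild l)))
    (w : ℝ) (hw : w ∈ Icc (G.c (G.Rchild l)) (G.d (G.Rchild l))) : z < w := by
  have hdisj := G.disj l
  by_contra hle
  push_neg at hle
  unfold Lchild at hz
  unfold Rchild at hw
  by_cases h : G.c (l ++ [false]) ≤ G.c (l ++ [true])
  · rw [if_pos h] at hz hw
    have hmem : G.c (l ++ [true]) ∈
        Icc (G.c (l ++ [false])) (G.d (l ++ [false])) ∩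
        Icc (G.c (l ++ [true])) (G.d (l ++ [true])) :=
      ⟨⟨h, le_trans (le_trans hw.1 hle) hz.2⟩,
       ⟨le_refl _, (G.c_lt_d _ (by simp)).le⟩⟩
    rw [hdisj] at hmem
    exact hmem
  · rw [if_neg h] at hz hw
    push_neg at h
    have hmem : G.c (l ++ [false]) ∈
        Icc (G.c (l ++ [false])) (G.d (l ++ [false])) ∩
        Icc (G.c (l ++ [true])) (G.d (l ++ [true])) :=
      ⟨⟨le_refl _, (G.c_lt_d _ (by simp)).le⟩,
       ⟨h.le, le_trans (le_trans hw.1 hle) hz.2⟩⟩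
    rw [hdisj] at hmem
    exact hmem

lemma exists_left_point (l : List Bool) (hl : l ≠ []) :
    ∃ x, x ∈ G.C ∧ x ∈ Icc (G.c l) (G.d l) ∧
      ∀ ε > 0, ∃ m, m ≠ [] ∧ Icc (G.c m) (G.d m) ⊆ Ioo x (x + ε) := by
  set L : ℕ → List Bool := fun k => G.Lchild^[k] l with hL
  have hiter : ∀ k, L (k + 1) = G.Lchild (L k) := fun k => Function.iterate_succ_apply' _ _ _
  have hne : ∀ k, L k ≠ [] := by
    intro k; induction k with
    | zero => exact hl
    | succ k ih =>
        rw [hiter]; obtain ⟨i, hi⟩ := G.Lchild_eq (L k); rw [hi]; simp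
  have hlen : ∀ k, (L k).length = l.length + k := by
    intro k; induction k with
    | zero => simp [hL]
    | succ k ih =>
        rw [hiter]; obtain ⟨i, hi⟩ := G.Lchild_eq (L k); rw [hi]
        simp [ih]; omega
  have hsub : ∀ k, Icc (G.c (L (k + 1))) (G.d (L (k + 1))) ⊆ Icc (G.c (L k)) (G.d (L k)) := by
    intro k; rw [hiter]; obtain ⟨i, hi⟩ := G.Lchild_eq (L k); rw [hi]
    exact G.nested _ (hne k) i
  obtain ⟨x, hx⟩ := IsCompact.nonempty_iInter_of_sequence_nonempty_isCompact_isClosed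
    (fun k => Icc (G.c (L k)) (G.d (L k))) hsub
    (fun k => nonempty_Icc.2 (G.c_lt_d _ (hne k)).le) isCompact_Icc (fun _ => isClosed_Icc)
  have hxk : ∀ k, x ∈ Icc (G.c (L k)) (G.d (L k)) := fun k => mem_iInter.1 hx k
  have hx0 : x ∈ Icc (G.c l) (G.d l) := by
    have := hxk 0
    simpa only [hL, Function.iterate_zero, id_eq] using this
  refine ⟨x, ?_, hx0, ?_⟩
  · rw [G.mem_C_iff]
    intro n
    rcases le_or_gt (n + 1) l.length with h | h
    · refine ⟨l.take (n + 1), by simp [h], ?_⟩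
      have h1 : l.take (n + 1) ≠ [] := by
        intro hh
        have := congrArg List.length hh
        simp [h] at this
      have h2 := G.chain (l.take (n + 1)) (l.drop (n + 1)) h1
      rw [List.take_append_drop] at h2
      exact h2 hx0
    · exact ⟨L (n + 1 - l.length), by rw [hlen]; omega, hxk _⟩
  · intro ε hε
    obtain ⟨N, hN⟩ := G.exists_e_lt ε hε
    refine ⟨G.Rchild (L (N + 1)), ?_, ?_⟩
    · obtain ⟨i, hi⟩ := G.Rchild_eq (L (N + 1)); rw [hi]; simp
    · intro w hw
      have hxL : x ∈ Icc (G.c (G.Lchild (L (N + 1)))) (G.d (G.Lchild (L (N + 1)))) := by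
        rw [← hiter]; exact hxk (N + 2)
      have h1 : x < w := G.sep (L (N + 1)) x hxL w hw
      have hwk : w ∈ Icc (G.c (L (N + 1))) (G.d (L (N + 1))) := by
        obtain ⟨i, hi⟩ := G.Rchild_eq (L (N + 1)); rw [hi] at hw
        exact G.nested _ (hne (N + 1)) i hw
      have hdiam := G.diam_lt (L (N + 1)) (hne (N + 1))
      have hmono : G.e ((L (N + 1)).length) ≤ G.e (N + 1) := by
        apply G.e_anti.antitone; rw [hlen]; omega
      have hxN := hxk (N + 1)
      exact ⟨h1, by linarith [hxN.1, hxN.2, hwk.1, hwk.2]⟩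

end GenCantor


lemma genCantor_winning (a₀ b₀ : ℝ) (S : Set ℝ) (hS : S ⊆ Set.Icc a₀ b₀)
    (G : GenCantor) (hC : G.C ⊆ S) : ∃ σ : StratA a₀ b₀, WinningA σ S := by
  classical
  have hlp := fun (l : List Bool) (hl : l ≠ []) => G.exists_left_point l hl
  choose lp lpC lpIcc lpAcc using hlp
  set F : ℝ → ℝ → ℝ := fun p q =>
    if h : ∃ m, m ≠ [] ∧ Icc (G.c m) (G.d m) ⊆ Ioo p q then
      lp h.choose h.choose_spec.1
    else (p + q) / 2 with hF
  have hFpos : ∀ p q (h : ∃ m, m ≠ [] ∧ Icc (G.c m) (G.d m) ⊆ Ioo p q),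
      F p q ∈ G.C ∧ F p q ∈ Ioo p q := by
    intro p q h
    rw [hF]
    dsimp only
    rw [dif_pos h]
    exact ⟨lpC _ _, h.choose_spec.2 (lpIcc h.choose h.choose_spec.1)⟩
  have hFmid : ∀ p q, p < q → F p q ∈ Ioo p q := by
    intro p q hpq
    by_cases h : ∃ m, m ≠ [] ∧ Icc (G.c m) (G.d m) ⊆ Ioo p q
    · exact (hFpos p q h).2
    · rw [hF]; dsimp only; rw [dif_neg h]
      constructor <;> [linarith; linarith]
  refine ⟨⟨fun n a b => F (a (Fin.last n)) (b (Fin.last n)), ?_⟩, ?_⟩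
  · intro n a b hV
    have h := hFmid (a (Fin.last n)) (b (Fin.last n)) hV.2.2.2.2
    exact ⟨h.1, h.2⟩
  · intro z hz
    obtain ⟨a, b, hplay, hcons, hlim⟩ := hz
    obtain ⟨ha0, hb0, hstep⟩ := hplay
    -- the invariant holds along the play
    have hinit : ∃ m, m ≠ [] ∧ Icc (G.c m) (G.d m) ⊆ Ioo (a 0) (b 0) := by
      rw [ha0, hb0]
      set x := lp [false] (by simp) with hx
      have hxC : x ∈ G.C := lpC _ _
      have hxI : x ∈ Icc a₀ b₀ := hS (hC hxC)
      have hxb : x < b₀ := by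
        obtain ⟨m, hm, hms⟩ := lpAcc [false] (by simp) 1 one_pos
        obtain ⟨y, hyC, hyI⟩ := G.meets m hm
        have hy := hms hyI
        have : y ∈ Icc a₀ b₀ := hS (hC hyC)
        exact lt_of_lt_of_le hy.1 this.2
      obtain ⟨m, hm, hms⟩ := lpAcc [false] (by simp) (b₀ - x) (by linarith)
      refine ⟨m, hm, fun w hw => ?_⟩
      have := hms hw
      rw [mem_Ioo] at this ⊢
      constructor
      · exact lt_of_le_of_lt hxI.1 this.1
      · have : w < x + (b₀ - x) := this.2
        linarith
    have hinv : ∀ n, ∃ m, m ≠ [] ∧ Icc (G.c m) (G.d m) ⊆ Ioo (a n) (b n) := by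
      intro n
      induction n with
      | zero => exact hinit
      | succ n ih =>
          have hfa : a (n + 1) = F (a n) (b n) := hcons n
          have heq : a (n + 1) = lp ih.choose ih.choose_spec.1 := by
            rw [hfa, hF]; dsimp only; rw [dif_pos ih]
          set x := lp ih.choose ih.choose_spec.1 with hxdef
          have hab1 : a (n + 1) < b (n + 1) := (hstep n).2.1
          obtain ⟨m, hm, hms⟩ := lpAcc ih.choose ih.choose_spec.1
            (b (n + 1) - a (n + 1)) (by linarith)
          refine ⟨m, hm, fun w hw => ?_⟩
          have h2 := hms hw
          rw [mem_Ioo] at h2 ⊢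
          rw [← hxdef, ← heq] at h2
          constructor
          · exact h2.1
          · linarith [h2.2]
    have haC : ∀ n, a (n + 1) ∈ G.C := by
      intro n
      have hfa : a (n + 1) = F (a n) (b n) := hcons n
      have := hFpos (a n) (b n) (hinv n)
      rw [← hfa] at this
      exact this.1
    have hzC : z ∈ G.C := by
      have hlim' : Filter.Tendsto (fun n => a (n + 1)) Filter.atTop (nhds z) :=
        (Filter.tendsto_add_atTop_iff_nat 1).2 hlim
      exact G.closedC.mem_of_tendsto hlim' (Filter.Eventually.of_forall haC)
    exact hC hzC


section StratSec
variable {a₀ b₀ : ℝ}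

/-- Invariant for a frozen history of depth `k`. -/
def SInv (σ : StratA a₀ b₀) (k : ℕ) (h : (ℕ → ℝ) × (ℕ → ℝ)) : Prop :=
  h.1 0 = a₀ ∧ h.2 0 = b₀ ∧
  (∀ i j : ℕ, i < j → j ≤ k → h.1 i < h.1 j) ∧
  (∀ i j : ℕ, i < j → j ≤ k → h.2 j < h.2 i) ∧
  h.1 k < h.2 k ∧
  (∀ m : ℕ, k ≤ m → h.1 m = h.1 k ∧ h.2 m = h.2 k) ∧
  (∀ j : ℕ, j + 1 ≤ k →
    h.1 (j + 1) = σ.f j (fun i : Fin (j + 1) => h.1 i) (fun i : Fin (j + 1) => h.2 i))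

def snxt (σ : StratA a₀ b₀) (k : ℕ) (h : (ℕ → ℝ) × (ℕ → ℝ)) : ℝ :=
  σ.f k (fun i : Fin (k + 1) => h.1 i) (fun i : Fin (k + 1) => h.2 i)

lemma sinv_valid (σ : StratA a₀ b₀) (k : ℕ) (h : (ℕ → ℝ) × (ℕ → ℝ)) (hI : SInv σ k h) :
    ValidHistA a₀ b₀ (fun i : Fin (k + 1) => h.1 i) (fun i : Fin (k + 1) => h.2 i) := by
  obtain ⟨h1, h2, h3, h4, h5, h6, h7⟩ := hI
  refine ⟨h1, h2, ?_, ?_, h5⟩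
  · intro i j hij
    exact h3 i j (by exact hij) (Nat.lt_succ_iff.mp j.isLt)
  · intro i j hij
    exact h4 i j (by exact hij) (Nat.lt_succ_iff.mp j.isLt)

lemma snxt_mem (σ : StratA a₀ b₀) (k : ℕ) (h : (ℕ → ℝ) × (ℕ → ℝ)) (hI : SInv σ k h) :
    h.1 k < snxt σ k h ∧ snxt σ k h < h.2 k :=
  σ.valid k _ _ (sinv_valid σ k h hI)

def sext (σ : StratA a₀ b₀) (k : ℕ) (h : (ℕ → ℝ) × (ℕ → ℝ)) (β : ℝ) :
    (ℕ → ℝ) × (ℕ → ℝ) :=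
  (fun m => if m ≤ k then h.1 m else snxt σ k h, fun m => if m ≤ k then h.2 m else β)

lemma sext_inv (σ : StratA a₀ b₀) (k : ℕ) (h : (ℕ → ℝ) × (ℕ → ℝ)) (β : ℝ)
    (hI : SInv σ k h) (hβ1 : snxt σ k h < β) (hβ2 : β < h.2 k) :
    SInv σ (k + 1) (sext σ k h β) := by
  obtain ⟨h1, h2, h3, h4, h5, h6, h7⟩ := hI
  have hIfull : SInv σ k h := ⟨h1, h2, h3, h4, h5, h6, h7⟩
  have hle : ∀ i : ℕ, i ≤ k → h.1 i ≤ h.1 k := by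
    intro i hi
    rcases eq_or_lt_of_le hi with rfl | hlt
    · exact le_refl _
    · exact (h3 i k hlt (le_refl _)).le
  have hge : ∀ i : ℕ, i ≤ k → h.2 k ≤ h.2 i := by
    intro i hi
    rcases eq_or_lt_of_le hi with rfl | hlt
    · exact le_refl _
    · exact (h4 i k hlt (le_refl _)).le
  refine ⟨?_, ?_, ?_, ?_, ?_, ?_, ?_⟩
  · show (if 0 ≤ k then h.1 0 else snxt σ k h) = a₀
    rw [if_pos (Nat.zero_le k)]; exact h1
  · show (if 0 ≤ k then h.2 0 else β) = b₀
    rw [if_pos (Nat.zero_le k)]; exact h2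
  · intro i j hij hjk
    show (if i ≤ k then h.1 i else _) < (if j ≤ k then h.1 j else _)
    rcases le_or_gt j k with hj | hj
    · rw [if_pos (le_trans hij.le hj), if_pos hj]
      exact h3 i j hij hj
    · have hjeq : j = k + 1 := by omega
      have hik : i ≤ k := by omega
      rw [if_pos hik, if_neg (by omega)]
      exact lt_of_le_of_lt (hle i hik) (snxt_mem σ k h hIfull).1
  · intro i j hij hjk
    show (if j ≤ k then h.2 j else _) < (if i ≤ k then h.2 i else _)
    rcases le_or_gt j k with hj | hj
    · rw [if_pos (le_trans hij.le hj), if_pos hj]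
      exact h4 i j hij hj
    · have hik : i ≤ k := by omega
      rw [if_pos hik, if_neg (by omega)]
      exact lt_of_lt_of_le hβ2 (hge i hik)
  · show (if k + 1 ≤ k then h.1 (k + 1) else _) < (if k + 1 ≤ k then h.2 (k + 1) else _)
    rw [if_neg (by omega), if_neg (by omega)]
    exact hβ1
  · intro m hm
    constructor
    · show (if m ≤ k then h.1 m else _) = (if k + 1 ≤ k then h.1 (k + 1) else _)
      rw [if_neg (by omega), if_neg (by omega)]
    · show (if m ≤ k then h.2 m else _) = (if k + 1 ≤ k then h.2 (k + 1) else _)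
      rw [if_neg (by omega), if_neg (by omega)]
  · intro j hjk
    have hrestr : ∀ jj : ℕ, jj ≤ k →
        ((fun i : Fin (jj + 1) => (sext σ k h β).1 i) = fun i : Fin (jj + 1) => h.1 i) ∧
        ((fun i : Fin (jj + 1) => (sext σ k h β).2 i) = fun i : Fin (jj + 1) => h.2 i) := by
      intro jj hjj
      constructor <;> funext i <;>
        · show (if (i : ℕ) ≤ k then _ else _) = _
          rw [if_pos (le_trans (Nat.lt_succ_iff.mp i.isLt) hjj)]
    rcases le_or_gt (j + 1) k with hj | hj
    · show (if j + 1 ≤ k then h.1 (j + 1) else _) = _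
      rw [if_pos hj, (hrestr j (by omega)).1, (hrestr j (by omega)).2]
      exact h7 j hj
    · have hjeq : j = k := by omega
      subst hjeq
      show (if j + 1 ≤ j then h.1 (j + 1) else snxt σ j h) = _
      rw [if_neg (by omega), (hrestr j (le_refl _)).1, (hrestr j (le_refl _)).2]
      rfl

end StratSec


section StratSec2
variable {a₀ b₀ : ℝ}

noncomputable def sβ1 (σ : StratA a₀ b₀) (k : ℕ) (h : (ℕ → ℝ) × (ℕ → ℝ)) : ℝ :=
  (snxt σ k h + min (h.2 k) (snxt σ k h + (1/2) ^ (k + 1))) / 2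

noncomputable def schild1 (σ : StratA a₀ b₀) (k : ℕ) (h : (ℕ → ℝ) × (ℕ → ℝ)) :
    (ℕ → ℝ) × (ℕ → ℝ) := sext σ k h (sβ1 σ k h)

noncomputable def sα1 (σ : StratA a₀ b₀) (k : ℕ) (h : (ℕ → ℝ) × (ℕ → ℝ)) : ℝ :=
  snxt σ (k + 1) (schild1 σ k h)

noncomputable def sβ0 (σ : StratA a₀ b₀) (k : ℕ) (h : (ℕ → ℝ) × (ℕ → ℝ)) : ℝ :=
  (snxt σ k h + sα1 σ k h) / 2

noncomputable def schild0 (σ : StratA a₀ b₀) (k : ℕ) (h : (ℕ → ℝ) × (ℕ → ℝ)) :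
    (ℕ → ℝ) × (ℕ → ℝ) := sext σ k h (sβ0 σ k h)

lemma sβ1_facts (σ : StratA a₀ b₀) (k : ℕ) (h : (ℕ → ℝ) × (ℕ → ℝ)) (hI : SInv σ k h) :
    snxt σ k h < sβ1 σ k h ∧ sβ1 σ k h < h.2 k ∧
      sβ1 σ k h < snxt σ k h + (1/2) ^ (k + 1) := by
  have hm := snxt_mem σ k h hI
  have hp : (0:ℝ) < (1/2) ^ (k + 1) := by positivity
  have hmin : snxt σ k h < min (h.2 k) (snxt σ k h + (1/2) ^ (k + 1)) :=
    lt_min hm.2 (by linarith)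
  have h1 : min (h.2 k) (snxt σ k h + (1/2) ^ (k + 1)) ≤ h.2 k := min_le_left _ _
  have h2 : min (h.2 k) (snxt σ k h + (1/2) ^ (k + 1)) ≤ snxt σ k h + (1/2) ^ (k + 1) :=
    min_le_right _ _
  unfold sβ1
  refine ⟨by linarith, by linarith, by linarith⟩

lemma schild1_inv (σ : StratA a₀ b₀) (k : ℕ) (h : (ℕ → ℝ) × (ℕ → ℝ)) (hI : SInv σ k h) :
    SInv σ (k + 1) (schild1 σ k h) :=
  sext_inv σ k h _ hI (sβ1_facts σ k h hI).1 (sβ1_facts σ k h hI).2.1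

lemma schild1_at (σ : StratA a₀ b₀) (k : ℕ) (h : (ℕ → ℝ) × (ℕ → ℝ)) :
    (schild1 σ k h).1 (k + 1) = snxt σ k h ∧ (schild1 σ k h).2 (k + 1) = sβ1 σ k h := by
  constructor
  · show (if k + 1 ≤ k then _ else snxt σ k h) = snxt σ k h
    rw [if_neg (by omega)]
  · show (if k + 1 ≤ k then _ else sβ1 σ k h) = sβ1 σ k h
    rw [if_neg (by omega)]

lemma sα1_facts (σ : StratA a₀ b₀) (k : ℕ) (h : (ℕ → ℝ) × (ℕ → ℝ)) (hI : SInv σ k h) :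
    snxt σ k h < sα1 σ k h ∧ sα1 σ k h < sβ1 σ k h := by
  have := snxt_mem σ (k + 1) (schild1 σ k h) (schild1_inv σ k h hI)
  rw [(schild1_at σ k h).1, (schild1_at σ k h).2] at this
  exact this

lemma sβ0_facts (σ : StratA a₀ b₀) (k : ℕ) (h : (ℕ → ℝ) × (ℕ → ℝ)) (hI : SInv σ k h) :
    snxt σ k h < sβ0 σ k h ∧ sβ0 σ k h < sα1 σ k h ∧ sβ0 σ k h < h.2 k ∧
      sβ0 σ k h < snxt σ k h + (1/2) ^ (k + 1) := by
  have ha := sα1_facts σ k h hI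
  have hb := sβ1_facts σ k h hI
  unfold sβ0
  refine ⟨by linarith [ha.1], by linarith [ha.1, ha.2], ?_, ?_⟩
  · linarith [ha.1, ha.2, hb.2.1]
  · linarith [ha.1, ha.2, hb.2.2]

lemma schild0_inv (σ : StratA a₀ b₀) (k : ℕ) (h : (ℕ → ℝ) × (ℕ → ℝ)) (hI : SInv σ k h) :
    SInv σ (k + 1) (schild0 σ k h) :=
  sext_inv σ k h _ hI (sβ0_facts σ k h hI).1
    (by have := sβ0_facts σ k h hI; exact this.2.2.1)

lemma schild0_at (σ : StratA a₀ b₀) (k : ℕ) (h : (ℕ → ℝ) × (ℕ → ℝ)) :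
    (schild0 σ k h).1 (k + 1) = snxt σ k h ∧ (schild0 σ k h).2 (k + 1) = sβ0 σ k h := by
  constructor
  · show (if k + 1 ≤ k then _ else snxt σ k h) = snxt σ k h
    rw [if_neg (by omega)]
  · show (if k + 1 ≤ k then _ else sβ0 σ k h) = sβ0 σ k h
    rw [if_neg (by omega)]

noncomputable def sstep (σ : StratA a₀ b₀) (p : ℕ × ((ℕ → ℝ) × (ℕ → ℝ))) (i : Bool) :
    ℕ × ((ℕ → ℝ) × (ℕ → ℝ)) :=
  (p.1 + 1, if i then schild1 σ p.1 p.2 else schild0 σ p.1 p.2)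

noncomputable def snode (σ : StratA a₀ b₀) (l : List Bool) : ℕ × ((ℕ → ℝ) × (ℕ → ℝ)) :=
  l.foldl (sstep σ) (0, (fun _ => a₀, fun _ => b₀))

lemma snode_app (σ : StratA a₀ b₀) (l : List Bool) (i : Bool) :
    snode σ (l ++ [i]) = sstep σ (snode σ l) i := by
  unfold snode
  rw [List.foldl_append]
  rfl

lemma snode_len (σ : StratA a₀ b₀) (l : List Bool) : (snode σ l).1 = l.length := by
  induction l using List.reverseRecOn with
  | nil => rfl
  | append_singleton l i ih =>
      rw [snode_app]
      show (snode σ l).1 + 1 = _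
      simp [ih]

lemma snode_inv (σ : StratA a₀ b₀) (hab : a₀ < b₀) (l : List Bool) :
    SInv σ (snode σ l).1 (snode σ l).2 := by
  induction l using List.reverseRecOn with
  | nil =>
      show SInv σ 0 (fun _ => a₀, fun _ => b₀)
      exact ⟨rfl, rfl, fun i j hij hjk => absurd hjk (by omega),
        fun i j hij hjk => absurd hjk (by omega), hab, fun m _ => ⟨rfl, rfl⟩,
        fun j hj => absurd hj (by omega)⟩
  | append_singleton l i ih =>
      rw [snode_app]
      show SInv σ ((snode σ l).1 + 1) _
      cases i
      · simpa [sstep] using schild0_inv σ (snode σ l).1 (snode σ l).2 ih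
      · simpa [sstep] using schild1_inv σ (snode σ l).1 (snode σ l).2 ih

/-- The interval endpoints for the Cantor scheme induced by a strategy. -/
noncomputable def scc (σ : StratA a₀ b₀) (l : List Bool) : ℝ :=
  snxt σ (snode σ l).1 (snode σ l).2

noncomputable def sdd (σ : StratA a₀ b₀) (l : List Bool) : ℝ :=
  (snode σ l).2.2 (snode σ l).1

lemma scc_lt_sdd (σ : StratA a₀ b₀) (hab : a₀ < b₀) (l : List Bool) :
    scc σ l < sdd σ l :=
  (snxt_mem σ _ _ (snode_inv σ hab l)).2

lemma sstep_facts (σ : StratA a₀ b₀) (hab : a₀ < b₀) (l : List Bool) (i : Bool) :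
    scc σ l < scc σ (l ++ [i]) ∧ sdd σ (l ++ [i]) < sdd σ l ∧
      sdd σ (l ++ [i]) < scc σ l + (1/2) ^ ((snode σ l).1 + 1) := by
  have hI := snode_inv σ hab l
  set k := (snode σ l).1 with hk
  set h := (snode σ l).2 with hh
  have happ := snode_app σ l i
  cases i
  · have h0 := sβ0_facts σ k h hI
    have hat := schild0_at σ k h
    have hc1 : (snode σ (l ++ [false])).1 = k + 1 := by rw [happ]; rfl
    have hc2 : (snode σ (l ++ [false])).2 = schild0 σ k h := by rw [happ]; rfl
    constructor
    · show snxt σ k h < scc σ (l ++ [false])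
      unfold scc
      rw [hc1, hc2]
      have := snxt_mem σ (k + 1) (schild0 σ k h) (schild0_inv σ k h hI)
      rw [hat.1] at this
      exact this.1
    constructor
    · show sdd σ (l ++ [false]) < sdd σ l
      unfold sdd
      rw [hc1, hc2, hat.2]
      exact h0.2.2.1
    · show sdd σ (l ++ [false]) < snxt σ k h + _
      unfold sdd
      rw [hc1, hc2, hat.2]
      exact h0.2.2.2
  · have h1 := sβ1_facts σ k h hI
    have hat := schild1_at σ k h
    have hc1 : (snode σ (l ++ [true])).1 = k + 1 := by rw [happ]; rfl
    have hc2 : (snode σ (l ++ [true])).2 = schild1 σ k h := by rw [happ]; rfl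
    constructor
    · show snxt σ k h < scc σ (l ++ [true])
      unfold scc
      rw [hc1, hc2]
      have := snxt_mem σ (k + 1) (schild1 σ k h) (schild1_inv σ k h hI)
      rw [hat.1] at this
      exact this.1
    constructor
    · show sdd σ (l ++ [true]) < sdd σ l
      unfold sdd
      rw [hc1, hc2, hat.2]
      exact h1.2.1
    · show sdd σ (l ++ [true]) < snxt σ k h + _
      unfold sdd
      rw [hc1, hc2, hat.2]
      exact h1.2.2

lemma sdisj (σ : StratA a₀ b₀) (hab : a₀ < b₀) (l : List Bool) :
    sdd σ (l ++ [false]) < scc σ (l ++ [true]) := by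
  have hI := snode_inv σ hab l
  set k := (snode σ l).1 with hk
  set h := (snode σ l).2 with hh
  have h0 := sβ0_facts σ k h hI
  have hc1 : (snode σ (l ++ [false])).1 = k + 1 := by rw [snode_app]; rfl
  have hc2 : (snode σ (l ++ [false])).2 = schild0 σ k h := by rw [snode_app]; rfl
  have hd1 : (snode σ (l ++ [true])).1 = k + 1 := by rw [snode_app]; rfl
  have hd2 : (snode σ (l ++ [true])).2 = schild1 σ k h := by rw [snode_app]; rfl
  have e1 : sdd σ (l ++ [false]) = sβ0 σ k h := by
    unfold sdd; rw [hc1, hc2, (schild0_at σ k h).2]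
  have e2 : scc σ (l ++ [true]) = sα1 σ k h := by
    unfold scc sα1; rw [hd1, hd2]
  rw [e1, e2]
  exact h0.2.1

end StratSec2


lemma sstep_frozen {a₀ b₀ : ℝ} (σ : StratA a₀ b₀) (p : ℕ × ((ℕ → ℝ) × (ℕ → ℝ)))
    (i : Bool) (m : ℕ) (hm : m ≤ p.1) :
    (sstep σ p i).2.1 m = p.2.1 m ∧ (sstep σ p i).2.2 m = p.2.2 m := by
  cases i
  · constructor
    · show (if m ≤ p.1 then p.2.1 m else _) = p.2.1 m
      rw [if_pos hm]
    · show (if m ≤ p.1 then p.2.2 m else _) = p.2.2 m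
      rw [if_pos hm]
  · constructor
    · show (if m ≤ p.1 then p.2.1 m else _) = p.2.1 m
      rw [if_pos hm]
    · show (if m ≤ p.1 then p.2.2 m else _) = p.2.2 m
      rw [if_pos hm]

lemma strat_contains_genCantor {a₀ b₀ : ℝ} (hab : a₀ < b₀) (σ : StratA a₀ b₀) :
    ∃ G : GenCantor, G.C ⊆ limitSetA σ := by
  have hinit := snode_inv σ hab ([] : List Bool)
  have hG : ∃ G : GenCantor, G.c = scc σ ∧ G.d = sdd σ ∧
      G.e = fun n => 4 * (1/2 : ℝ) ^ n := by
    refine ⟨⟨a₀, b₀, hab, fun n => 4 * (1/2) ^ n, fun n => by positivity, ?_, ?_,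
      scc σ, sdd σ, ?_, ?_, ?_, ?_, ?_⟩, rfl, rfl, rfl⟩
    · intro a b h
      dsimp only
      have := pow_lt_pow_right_of_lt_one₀ (by norm_num : (0:ℝ) < 1/2) (by norm_num) h
      linarith
    · have := (tendsto_pow_atTop_nhds_zero_of_lt_one
        (by norm_num : (0:ℝ) ≤ 1/2) (by norm_num)).const_mul (4:ℝ)
      simpa using this
    · intro l _
      linarith [scc_lt_sdd σ hab l]
    · intro l hl
      obtain ⟨m, j, rfl⟩ : ∃ m j, l = m ++ [j] :=
        ⟨l.dropLast, l.getLast hl, (List.dropLast_append_getLast hl).symm⟩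
      have hf := sstep_facts σ hab m j
      have hk : (snode σ m).1 = m.length := snode_len σ m
      rw [hk] at hf
      have hp : (0:ℝ) < (1/2) ^ (m.length + 1) := by positivity
      have hlen : (m ++ [j]).length = m.length + 1 := by simp
      rw [hlen]
      linarith [hf.1, hf.2.2]
    · intro i
      have hf := sstep_facts σ hab [] i
      have h0 := snxt_mem σ (snode σ ([] : List Bool)).1 (snode σ ([] : List Bool)).2 hinit
      have ha : (snode σ ([] : List Bool)).2.1 (snode σ ([] : List Bool)).1 = a₀ := rfl
      have hb : (snode σ ([] : List Bool)).2.2 (snode σ ([] : List Bool)).1 = b₀ := rfl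
      have hcc : a₀ < scc σ ([] : List Bool) := by
        unfold scc; exact lt_of_eq_of_lt ha.symm h0.1
      have hdd : sdd σ ([] : List Bool) = b₀ := rfl
      have h1 : a₀ < scc σ [i] := lt_trans hcc hf.1
      have h2 : sdd σ [i] < b₀ := lt_of_lt_of_eq hf.2.1 hdd
      exact Icc_subset_Icc h1.le h2.le
    · intro l _ i
      exact Icc_subset_Icc (sstep_facts σ hab l i).1.le (sstep_facts σ hab l i).2.1.le
    · intro l
      rw [Set.eq_empty_iff_forall_notMem]
      rintro w ⟨⟨_, hw1⟩, ⟨hw2, _⟩⟩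
      have := sdisj σ hab l
      linarith
  obtain ⟨G, hGc, hGd, hGe⟩ := hG
  refine ⟨G, ?_⟩
  intro z hz
  have hzn := (G.mem_C_iff z).1 hz
  choose lSeq hlen hzl using hzn
  have hne : ∀ n, lSeq n ≠ [] := by
    intro n hh
    have := hlen n
    rw [hh] at this
    simp at this
  have uniq : ∀ (n : ℕ) (l' : List Bool), l'.length = n + 1 →
      z ∈ Icc (G.c l') (G.d l') → l' = lSeq n := by
    intro n l' hl' hzl'
    by_contra hnee
    have hd := G.levels_disj (n + 1) l' (lSeq n) hl' (hlen n)
      (by intro hh; rw [hh] at hl'; simp at hl') hnee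
    rw [Set.eq_empty_iff_forall_notMem] at hd
    exact hd z ⟨hzl', hzl n⟩
  have hrepr : ∀ n, lSeq (n + 1) = lSeq n ++ [(lSeq (n + 1)).getLast (hne (n + 1))] := by
    intro n
    have hdl : (lSeq (n + 1)).dropLast = lSeq n := by
      apply uniq
      · rw [List.length_dropLast, hlen]; omega
      · have hdne : (lSeq (n + 1)).dropLast ≠ [] := by
          intro hh
          have := congrArg List.length hh
          rw [List.length_dropLast, hlen] at this
          simp at this
        have h2 := G.nested (lSeq (n + 1)).dropLast hdne ((lSeq (n + 1)).getLast (hne (n + 1)))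
        rw [List.dropLast_append_getLast (hne (n + 1))] at h2
        exact h2 (hzl (n + 1))
    conv_lhs => rw [← List.dropLast_append_getLast (hne (n + 1))]
    rw [hdl]
  set aP : ℕ → ℝ := fun m => (snode σ (lSeq m)).2.1 m with haP
  set bP : ℕ → ℝ := fun m => (snode σ (lSeq m)).2.2 m with hbP
  have agree' : ∀ n m, m ≤ n + 1 →
      (snode σ (lSeq (n + 1))).2.1 m = (snode σ (lSeq n)).2.1 m ∧
      (snode σ (lSeq (n + 1))).2.2 m = (snode σ (lSeq n)).2.2 m := by
    intro n m hm
    have happ : snode σ (lSeq (n + 1)) =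
        sstep σ (snode σ (lSeq n)) ((lSeq (n + 1)).getLast (hne (n + 1))) := by
      conv_lhs => rw [hrepr n]
      rw [snode_app]
    rw [happ]
    exact sstep_frozen σ (snode σ (lSeq n)) _ m (by rw [snode_len, hlen]; omega)
  have agree : ∀ n m, m ≤ n + 1 →
      (snode σ (lSeq n)).2.1 m = aP m ∧ (snode σ (lSeq n)).2.2 m = bP m := by
    intro n
    induction n with
    | zero =>
        intro m hm
        rcases Nat.le_one_iff_eq_zero_or_eq_one.mp hm with rfl | rfl
        · exact ⟨rfl, rfl⟩
        · exact ⟨((agree' 0 1 le_rfl).1).symm, ((agree' 0 1 le_rfl).2).symm⟩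
    | succ n ih =>
        intro m hm
        rcases eq_or_lt_of_le hm with heq | hlt
        · subst heq
          exact ⟨((agree' (n + 1) (n + 1 + 1) le_rfl).1).symm,
            ((agree' (n + 1) (n + 1 + 1) le_rfl).2).symm⟩
        · have hmn : m ≤ n + 1 := by omega
          have h1 := agree' n m hmn
          have h2 := ih m hmn
          exact ⟨h1.1.trans h2.1, h1.2.trans h2.2⟩
  have hk : ∀ n, (snode σ (lSeq n)).1 = n + 1 := fun n => by rw [snode_len, hlen]
  have haP0 : aP 0 = a₀ := (snode_inv σ hab (lSeq 0)).1
  have hbP0 : bP 0 = b₀ := (snode_inv σ hab (lSeq 0)).2.1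
  have hplay : ∀ n : ℕ, aP n < aP (n + 1) ∧ aP (n + 1) < bP (n + 1) ∧ bP (n + 1) < bP n := by
    intro n
    obtain ⟨i1, i2, i3, i4, i5, i6, i7⟩ := snode_inv σ hab (lSeq (n + 1))
    have hkk := hk (n + 1)
    have ea0 := (agree (n + 1) n (by omega)).1
    have ea1 := (agree (n + 1) (n + 1) (by omega)).1
    have eb0 := (agree (n + 1) n (by omega)).2
    have eb1 := (agree (n + 1) (n + 1) (by omega)).2
    refine ⟨?_, ?_, ?_⟩
    · rw [← ea0, ← ea1]; exact i3 n (n + 1) (by omega) (by omega)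
    · rw [← ea1, ← eb1]
      have g1 : (snode σ (lSeq (n + 1))).2.1 (n + 1) < (snode σ (lSeq (n + 1))).2.1 (n + 2) :=
        i3 (n + 1) (n + 2) (by omega) (by omega)
      have g2 : (snode σ (lSeq (n + 1))).2.1 (n + 2) < (snode σ (lSeq (n + 1))).2.2 (n + 2) := by
        have h5 := i5
        rw [hkk] at h5
        exact h5
      have g3 : (snode σ (lSeq (n + 1))).2.2 (n + 2) < (snode σ (lSeq (n + 1))).2.2 (n + 1) :=
        i4 (n + 1) (n + 2) (by omega) (by omega)
      linarith
    · rw [← eb0, ← eb1]; exact i4 n (n + 1) (by omega) (by omega)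
  have hcons : ConsistentA σ aP bP := by
    intro n
    obtain ⟨i1, i2, i3, i4, i5, i6, i7⟩ := snode_inv σ hab (lSeq (n + 1))
    have hkk := hk (n + 1)
    have h7 := i7 n (by omega)
    have ea1 := (agree (n + 1) (n + 1) (by omega)).1
    have eaf : (fun i : Fin (n + 1) => (snode σ (lSeq (n + 1))).2.1 i) =
        fun i : Fin (n + 1) => aP i :=
      funext fun i => (agree (n + 1) i (le_trans (Nat.lt_succ_iff.mp i.isLt) (by omega))).1
    have ebf : (fun i : Fin (n + 1) => (snode σ (lSeq (n + 1))).2.2 i) =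
        fun i : Fin (n + 1) => bP i :=
      funext fun i => (agree (n + 1) i (le_trans (Nat.lt_succ_iff.mp i.isLt) (by omega))).2
    show aP (n + 1) = _
    rw [← ea1, h7, eaf, ebf]
  have hccn : ∀ n, scc σ (lSeq n) = aP (n + 2) := by
    intro n
    have hkn := hk n
    have hcons2 := hcons (n + 1)
    show snxt σ (snode σ (lSeq n)).1 (snode σ (lSeq n)).2 = aP (n + 2)
    rw [hkn]
    unfold snxt
    have eaf : (fun i : Fin (n + 1 + 1) => (snode σ (lSeq n)).2.1 i) =
        fun i : Fin (n + 1 + 1) => aP i :=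
      funext fun i => (agree n i (Nat.lt_succ_iff.mp i.isLt)).1
    have ebf : (fun i : Fin (n + 1 + 1) => (snode σ (lSeq n)).2.2 i) =
        fun i : Fin (n + 1 + 1) => bP i :=
      funext fun i => (agree n i (Nat.lt_succ_iff.mp i.isLt)).2
    rw [eaf, ebf]
    exact hcons2.symm
  have hbound : ∀ n, 0 ≤ z - aP (n + 2) ∧ z - aP (n + 2) ≤ 4 * (1/2 : ℝ) ^ (n + 1) := by
    intro n
    have h1 := hzl n
    rw [hGc, hGd] at h1
    have e3 : G.e ((lSeq n).length) = 4 * (1/2 : ℝ) ^ (n + 1) := by rw [hGe, hlen]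
    have h2 : sdd σ (lSeq n) - scc σ (lSeq n) < 4 * (1/2 : ℝ) ^ (n + 1) := by
      have hdl := G.diam_lt (lSeq n) (hne n)
      rw [hGc, hGd, e3] at hdl
      exact hdl
    have hcc := hccn n
    rw [← hcc]
    exact ⟨by linarith [h1.1], by linarith [h1.1, h1.2]⟩
  have htend : Filter.Tendsto (fun n => aP (n + 2)) Filter.atTop (nhds z) := by
    rw [tendsto_iff_dist_tendsto_zero]
    refine squeeze_zero (g := fun n => 4 * (1/2 : ℝ) ^ (n + 1)) (fun n => dist_nonneg)
      (fun n => ?_) ?_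
    · have hb := hbound n
      rw [Real.dist_eq, abs_sub_le_iff]
      exact ⟨by linarith [hb.1], by linarith [hb.2]⟩
    · have h0 : Filter.Tendsto (fun n : ℕ => 4 * (1/2 : ℝ) ^ n) Filter.atTop (nhds 0) := by
        have := (tendsto_pow_atTop_nhds_zero_of_lt_one
          (by norm_num : (0:ℝ) ≤ 1/2) (by norm_num)).const_mul (4:ℝ)
        simpa using this
      exact h0.comp (Filter.tendsto_add_atTop_nat 1)
  have hlimA : Filter.Tendsto aP Filter.atTop (nhds z) :=
    (Filter.tendsto_add_atTop_iff_nat 2).1 htend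
  exact ⟨aP, bP, ⟨haP0, hbP0, hplay⟩, hcons, hlimA⟩



/-- player A has a winning strategy iff `S` contains a generalized
Cantor set iff `S` contains a nonempty perfect set. -/
theorem stmt5 (a₀ b₀ : ℝ) (hab : a₀ < b₀) (S : Set ℝ) (hS : S ⊆ Set.Icc a₀ b₀)
    (hSunc : ¬ S.Countable) :
    List.TFAE [
      ∃ σ : StratA a₀ b₀, WinningA σ S,
      ∃ C : Set ℝ, IsGenCantorSet C ∧ C ⊆ S,
      ∃ P : Set ℝ, P.Nonempty ∧ PerfectSet P ∧ P ⊆ S] := by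
  tfae_have 1 → 2 := by
    rintro ⟨σ, hσ⟩
    obtain ⟨G, hG⟩ := strat_contains_genCantor hab σ
    exact ⟨G.C, ⟨G, rfl⟩, hG.trans hσ⟩
  tfae_have 2 → 3 := by
    rintro ⟨C, ⟨G, rfl⟩, hCS⟩
    exact ⟨G.C, G.nonemptyC, G.perfectC, hCS⟩
  tfae_have 3 → 2 := by
    rintro ⟨P, hPne, hPperf, hPS⟩
    obtain ⟨G, hGP⟩ := perfect_contains_genCantor P hPne hPperf
    exact ⟨G.C, ⟨G, rfl⟩, hGP.trans hPS⟩
  tfae_have 2 → 1 := by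
    rintro ⟨C, ⟨G, rfl⟩, hCS⟩
    exact genCantor_winning a₀ b₀ S hS G hCS
  tfae_finish
end

section
/- In the Cantor game on [a₀, b₀] with an uncountable target set S ⊆ [a₀, b₀], the limit set of any strategy for player B contains a generalized Cantor set. -/
open Filter Set

namespace Stmt6Aux

open Filter Set

lemma halfpow_pos (n : ℕ) : (0:ℝ) < (1/2:ℝ)^n := by positivity

lemma strictMono_snoc' {n : ℕ} {f : Fin (n + 1) → ℝ} (hf : StrictMono f) {x : ℝ}
    (hx : f (Fin.last n) < x) : StrictMono (Fin.snoc f x : Fin (n+2) → ℝ) := by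
  rw [Fin.strictMono_iff_lt_succ]
  intro i
  induction i using Fin.lastCases with
  | last => rw [Fin.succ_last, Fin.snoc_last, Fin.snoc_castSucc]
            exact lt_of_le_of_lt (hf.monotone (Fin.le_last _)) hx
  | cast j =>
      rw [Fin.succ_castSucc, Fin.snoc_castSucc, Fin.snoc_castSucc]
      exact hf Fin.castSucc_lt_succ

lemma snoc_zero {n : ℕ} (f : Fin (n+1) → ℝ) (x : ℝ) :
    (Fin.snoc f x : Fin (n+2) → ℝ) 0 = f 0 := by
  simp [Fin.snoc]

variable {a₀ b₀ : ℝ}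

/-- A's candidate moves and B's responses, given a history. -/
noncomputable def nx0 (σ : StratB a₀ b₀) (n : ℕ) (aa bb : Fin (n+1) → ℝ) : ℝ :=
  bb (Fin.last n) - (min (bb (Fin.last n) - aa (Fin.last n)) ((1/2:ℝ)^(n+1)))/2

noncomputable def ny0 (σ : StratB a₀ b₀) (n : ℕ) (aa bb : Fin (n+1) → ℝ) : ℝ :=
  σ.g n (Fin.snoc aa (nx0 σ n aa bb)) bb

noncomputable def nx1 (σ : StratB a₀ b₀) (n : ℕ) (aa bb : Fin (n+1) → ℝ) : ℝ :=
  (ny0 σ n aa bb + bb (Fin.last n))/2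

noncomputable def ny1 (σ : StratB a₀ b₀) (n : ℕ) (aa bb : Fin (n+1) → ℝ) : ℝ :=
  σ.g n (Fin.snoc aa (nx1 σ n aa bb)) bb

noncomputable def nextPair (σ : StratB a₀ b₀) (n : ℕ) (aa bb : Fin (n+1) → ℝ) (i : Bool) : ℝ × ℝ :=
  cond i (nx1 σ n aa bb, ny1 σ n aa bb) (nx0 σ n aa bb, ny0 σ n aa bb)

lemma validHistB_snoc {n : ℕ} {aa bb : Fin (n+1) → ℝ}
    (h : ValidHistA a₀ b₀ aa bb) {x : ℝ} (hx1 : aa (Fin.last n) < x)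
    (hx2 : x < bb (Fin.last n)) : ValidHistB a₀ b₀ (Fin.snoc aa x) bb := by
  obtain ⟨h1, h2, h3, h4, h5⟩ := h
  refine ⟨?_, h2, strictMono_snoc' h3 hx1, h4, ?_⟩
  · rw [snoc_zero]; exact h1
  · rw [Fin.snoc_last]; exact hx2

/-- Master spec lemma for one round. -/
lemma nextPair_spec (σ : StratB a₀ b₀) (n : ℕ) (aa bb : Fin (n+1) → ℝ)
    (h : ValidHistA a₀ b₀ aa bb) :
    (∀ i : Bool, aa (Fin.last n) < (nextPair σ n aa bb i).1 ∧
      (nextPair σ n aa bb i).1 < (nextPair σ n aa bb i).2 ∧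
      (nextPair σ n aa bb i).2 < bb (Fin.last n) ∧
      (nextPair σ n aa bb i).2 - (nextPair σ n aa bb i).1 < (1/2:ℝ)^(n+1) ∧
      (nextPair σ n aa bb i).2 = σ.g n (Fin.snoc aa (nextPair σ n aa bb i).1) bb) ∧
    (nextPair σ n aa bb false).2 < (nextPair σ n aa bb true).1 := by
  have hab : aa (Fin.last n) < bb (Fin.last n) := h.2.2.2.2
  set an := aa (Fin.last n) with han
  set bn := bb (Fin.last n) with hbn
  have hδ : 0 < min (bn - an) ((1/2:ℝ)^(n+1)) :=
    lt_min (by linarith) (halfpow_pos _)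
  have hδ2 : min (bn - an) ((1/2:ℝ)^(n+1)) ≤ bn - an := min_le_left _ _
  have hδ3 : min (bn - an) ((1/2:ℝ)^(n+1)) ≤ (1/2:ℝ)^(n+1) := min_le_right _ _
  have hx0a : an < nx0 σ n aa bb := by
    rw [nx0, ← han, ← hbn]; linarith
  have hx0b : nx0 σ n aa bb < bn := by
    rw [nx0, ← hbn]; linarith
  have hy0 := σ.valid n (Fin.snoc aa (nx0 σ n aa bb)) bb (validHistB_snoc h hx0a hx0b)
  rw [Fin.snoc_last, ← hbn] at hy0
  have hy0a : nx0 σ n aa bb < ny0 σ n aa bb := hy0.1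
  have hy0b : ny0 σ n aa bb < bn := hy0.2
  have hx1a : ny0 σ n aa bb < nx1 σ n aa bb := by rw [nx1, ← hbn]; linarith
  have hx1b : nx1 σ n aa bb < bn := by rw [nx1, ← hbn]; linarith
  have hy1 := σ.valid n (Fin.snoc aa (nx1 σ n aa bb)) bb
    (validHistB_snoc h (lt_trans hx0a (lt_trans hy0a hx1a)) hx1b)
  rw [Fin.snoc_last, ← hbn] at hy1
  have hd0 : ny0 σ n aa bb - nx0 σ n aa bb < (1/2:ℝ)^(n+1) := by
    have : bn - nx0 σ n aa bb ≤ (1/2:ℝ)^(n+1) := by rw [nx0, ← hbn]; linarith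
    linarith
  have hd1 : ny1 σ n aa bb - nx1 σ n aa bb < (1/2:ℝ)^(n+1) := by
    have h1 : ny1 σ n aa bb < bn := hy1.2
    have h2 : bn - nx1 σ n aa bb < (1/2:ℝ)^(n+1) := by
      rw [nx1, ← hbn]
      have : bn - nx0 σ n aa bb ≤ (1/2:ℝ)^(n+1) := by rw [nx0, ← hbn]; linarith
      linarith
    linarith
  constructor
  · intro i
    cases i <;> simp only [nextPair, cond_false, cond_true]
    · exact ⟨hx0a, hy0a, hy0b, hd0, rfl⟩
    · exact ⟨lt_trans hx0a (lt_trans hy0a hx1a), hy1.1, hy1.2, hd1, rfl⟩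
  · simp only [nextPair, cond_false, cond_true]
    exact hx1a

end Stmt6Aux
namespace Stmt6Aux
open Filter Set
variable {a₀ b₀ : ℝ}

noncomputable def hist (σ : StratB a₀ b₀) (s : ℕ → Bool) : (n : ℕ) → Fin (n+1) → ℝ × ℝ
  | 0 => fun _ => (a₀, b₀)
  | n+1 => Fin.snoc (hist σ s n)
      (nextPair σ n (fun j => (hist σ s n j).1) (fun j => (hist σ s n j).2) (s n))

/-- endpoints after `n` rounds along branch `s`. -/
noncomputable def pt (σ : StratB a₀ b₀) (s : ℕ → Bool) (n : ℕ) : ℝ × ℝ :=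
  hist σ s n (Fin.last n)

lemma pt_succ (σ : StratB a₀ b₀) (s : ℕ → Bool) (n : ℕ) :
    pt σ s (n+1) = nextPair σ n (fun j => (hist σ s n j).1) (fun j => (hist σ s n j).2) (s n) := by
  simp [pt, hist]

lemma hist_succ_castSucc (σ : StratB a₀ b₀) (s : ℕ → Bool) (n : ℕ) (j : Fin (n+1)) :
    hist σ s (n+1) j.castSucc = hist σ s n j := by
  simp [hist]

lemma fst_snoc {n : ℕ} (H : Fin (n+1) → ℝ × ℝ) (p : ℝ × ℝ) :
    (fun j : Fin (n+2) => ((Fin.snoc H p : Fin (n+2) → ℝ × ℝ) j).1) = (Fin.snoc (fun j => (H j).1) p.1 : Fin (n+2) → ℝ) := by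
  funext j
  induction j using Fin.lastCases with
  | last => simp
  | cast j => simp

lemma snd_snoc {n : ℕ} (H : Fin (n+1) → ℝ × ℝ) (p : ℝ × ℝ) :
    (fun j : Fin (n+2) => ((Fin.snoc H p : Fin (n+2) → ℝ × ℝ) j).2) = (Fin.snoc (fun j => (H j).2) p.2 : Fin (n+2) → ℝ) := by
  funext j
  induction j using Fin.lastCases with
  | last => simp
  | cast j => simp

lemma strictAnti_snoc' {n : ℕ} {f : Fin (n + 1) → ℝ} (hf : StrictAnti f) {x : ℝ}
    (hx : x < f (Fin.last n)) : StrictAnti (Fin.snoc f x : Fin (n+2) → ℝ) := by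
  have h1 : StrictMono (fun j : Fin (n+1) => -(f j)) := fun i j hij => neg_lt_neg (hf hij)
  have h2 : StrictMono (Fin.snoc (fun j => -(f j)) (-x) : Fin (n+2) → ℝ) :=
    strictMono_snoc' h1 (neg_lt_neg hx)
  intro i j hij
  have h3 : (Fin.snoc (fun j => -(f j)) (-x) : Fin (n+2) → ℝ) i <
      (Fin.snoc (fun j => -(f j)) (-x) : Fin (n+2) → ℝ) j := h2 hij
  have e : ∀ k : Fin (n+2), (Fin.snoc (fun j => -(f j)) (-x) : Fin (n+2) → ℝ) k
      = -((Fin.snoc f x : Fin (n+2) → ℝ) k) := by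
    intro k
    induction k using Fin.lastCases with
    | last => simp
    | cast k => simp
  rw [e, e] at h3
  linarith

lemma hist_valid (σ : StratB a₀ b₀) (hab : a₀ < b₀) (s : ℕ → Bool) :
    ∀ n, ValidHistA a₀ b₀ (fun j => (hist σ s n j).1) (fun j => (hist σ s n j).2)
  | 0 => by
    refine ⟨rfl, rfl, ?_, ?_, hab⟩
    · intro i j hij
      exact absurd ((Fin.ext (by omega : (i:ℕ) = (j:ℕ)) : i = j) ▸ hij) (lt_irrefl j)
    · intro i j hij
      exact absurd ((Fin.ext (by omega : (i:ℕ) = (j:ℕ)) : i = j) ▸ hij) (lt_irrefl j)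
  | n+1 => by
    have ih := hist_valid σ hab s n
    obtain ⟨spec, _⟩ := nextPair_spec σ n _ _ ih
    obtain ⟨h1, h2, h3, _, _⟩ := spec (s n)
    show ValidHistA a₀ b₀ (fun j : Fin (n+2) => ((Fin.snoc (hist σ s n) _ : Fin (n+2) → ℝ×ℝ) j).1)
      (fun j : Fin (n+2) => ((Fin.snoc (hist σ s n) _ : Fin (n+2) → ℝ×ℝ) j).2)
    rw [fst_snoc, snd_snoc]
    refine ⟨?_, ?_, strictMono_snoc' ih.2.2.1 h1, strictAnti_snoc' ih.2.2.2.1 h3, ?_⟩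
    · rw [snoc_zero]; exact ih.1
    · rw [snoc_zero]; exact ih.2.1
    · rw [Fin.snoc_last, Fin.snoc_last]; exact h2

lemma hist_congr (σ : StratB a₀ b₀) {s t : ℕ → Bool} :
    ∀ n, (∀ k, k < n → s k = t k) → hist σ s n = hist σ t n
  | 0, _ => rfl
  | n+1, h => by
    have ih := hist_congr σ n (fun k hk => h k (Nat.lt_succ_of_lt hk))
    show Fin.snoc _ _ = Fin.snoc _ _
    rw [ih, h n (Nat.lt_succ_self n)]

lemma hist_restrict (σ : StratB a₀ b₀) (s : ℕ → Bool) :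
    ∀ n (i : Fin (n+1)), hist σ s n i = hist σ s i (Fin.last i)
  | 0, i => by
    have : i = 0 := Fin.ext (by omega)
    subst this; rfl
  | n+1, i => by
    induction i using Fin.lastCases with
    | last => rfl
    | cast j =>
      rw [hist_succ_castSucc]
      exact hist_restrict σ s n j

end Stmt6Aux
namespace Stmt6Aux
open Filter Set
variable {a₀ b₀ : ℝ}

lemma list_eq_nil_or_append (l : List Bool) : l = [] ∨ ∃ t i, l = t ++ [i] := by
  rcases List.eq_nil_or_concat l with h | ⟨t, i, h⟩
  · exact Or.inl h
  · exact Or.inr ⟨t, i, by rw [h, List.concat_eq_append]⟩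

def pad (l : List Bool) : ℕ → Bool := fun k => l.getD k false

noncomputable def cfun (σ : StratB a₀ b₀) (l : List Bool) : ℝ := (pt σ (pad l) l.length).1
noncomputable def dfun (σ : StratB a₀ b₀) (l : List Bool) : ℝ := (pt σ (pad l) l.length).2

lemma hist_pad_append (σ : StratB a₀ b₀) (l : List Bool) (i : Bool) :
    hist σ (pad (l ++ [i])) l.length = hist σ (pad l) l.length :=
  hist_congr σ l.length (fun k hk => by
    simp only [pad]
    exact List.getD_append _ _ _ _ hk)

lemma pad_append_self (l : List Bool) (i : Bool) : pad (l ++ [i]) l.length = i := by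
  simp [pad, List.getD_append_right]

lemma c_append (σ : StratB a₀ b₀) (l : List Bool) (i : Bool) :
    cfun σ (l ++ [i]) = (nextPair σ l.length (fun j => (hist σ (pad l) l.length j).1)
        (fun j => (hist σ (pad l) l.length j).2) i).1 := by
  have hlen : (l ++ [i]).length = l.length + 1 := by simp
  have h1 : cfun σ (l ++ [i]) = (pt σ (pad (l ++ [i])) (l.length + 1)).1 := by
    rw [cfun, hlen]
  rw [h1, pt_succ, hist_pad_append, pad_append_self]

lemma d_append (σ : StratB a₀ b₀) (l : List Bool) (i : Bool) :
    dfun σ (l ++ [i]) = (nextPair σ l.length (fun j => (hist σ (pad l) l.length j).1)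
        (fun j => (hist σ (pad l) l.length j).2) i).2 := by
  have hlen : (l ++ [i]).length = l.length + 1 := by simp
  have h1 : dfun σ (l ++ [i]) = (pt σ (pad (l ++ [i])) (l.length + 1)).2 := by
    rw [dfun, hlen]
  rw [h1, pt_succ, hist_pad_append, pad_append_self]

lemma cfun_lt_dfun (σ : StratB a₀ b₀) (hab : a₀ < b₀) (l : List Bool) :
    cfun σ l < dfun σ l := by
  rcases list_eq_nil_or_append l with rfl | ⟨t, i, rfl⟩
  · exact hab
  · rw [c_append, d_append]
    exact ((nextPair_spec σ t.length _ _ (hist_valid σ hab (pad t) t.length)).1 i).2.1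

lemma diam_lt' (σ : StratB a₀ b₀) (hab : a₀ < b₀) (t : List Bool) (i : Bool) :
    dfun σ (t ++ [i]) - cfun σ (t ++ [i]) < (1/2:ℝ)^(t.length + 1) := by
  rw [c_append, d_append]
  exact ((nextPair_spec σ t.length _ _ (hist_valid σ hab (pad t) t.length)).1 i).2.2.2.1

lemma nested' (σ : StratB a₀ b₀) (hab : a₀ < b₀) (t : List Bool) (i : Bool) :
    cfun σ t < cfun σ (t ++ [i]) ∧ dfun σ (t ++ [i]) < dfun σ t := by
  rw [c_append, d_append]
  have h := (nextPair_spec σ t.length _ _ (hist_valid σ hab (pad t) t.length)).1 i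
  exact ⟨h.1, h.2.2.1⟩

lemma sibling_disj (σ : StratB a₀ b₀) (hab : a₀ < b₀) (t : List Bool) :
    dfun σ (t ++ [false]) < cfun σ (t ++ [true]) := by
  rw [c_append, d_append]
  exact (nextPair_spec σ t.length _ _ (hist_valid σ hab (pad t) t.length)).2

lemma level_disj_aux (σ : StratB a₀ b₀) (hab : a₀ < b₀) :
    ∀ n (l l' : List Bool), l.length = n → l'.length = n → l ≠ l' →
      Icc (cfun σ l) (dfun σ l) ∩ Icc (cfun σ l') (dfun σ l') = ∅ := by
  intro n
  induction n with
  | zero =>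
    intro l l' hl hl' hne
    exact absurd (by rw [List.length_eq_zero_iff] at hl hl'; rw [hl, hl']) hne
  | succ n ih =>
    intro l l' hl hl' hne
    rcases list_eq_nil_or_append l with rfl | ⟨t, i, rfl⟩
    · simp at hl
    rcases list_eq_nil_or_append l' with rfl | ⟨t', i', rfl⟩
    · simp at hl'
    have ht : t.length = n := by simpa using hl
    have ht' : t'.length = n := by simpa using hl'
    by_cases htt : t = t'
    · subst htt
      have hii : i ≠ i' := fun h => hne (by rw [h])
      have disj : Icc (cfun σ (t ++ [false])) (dfun σ (t ++ [false])) ∩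
          Icc (cfun σ (t ++ [true])) (dfun σ (t ++ [true])) = ∅ := by
        rw [eq_empty_iff_forall_notMem]
        rintro z ⟨hz1, hz2⟩
        rw [mem_Icc] at hz1 hz2
        have := sibling_disj σ hab t
        linarith [hz1.2, hz2.1]
      cases i <;> cases i'
      · exact absurd rfl hii
      · exact disj
      · rw [inter_comm]; exact disj
      · exact absurd rfl hii
    · have h1 := nested' σ hab t i
      have h2 := nested' σ hab t' i'
      apply eq_empty_of_subset_empty
      calc Icc (cfun σ (t ++ [i])) (dfun σ (t ++ [i])) ∩
            Icc (cfun σ (t' ++ [i'])) (dfun σ (t' ++ [i']))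
          ⊆ Icc (cfun σ t) (dfun σ t) ∩ Icc (cfun σ t') (dfun σ t') :=
            inter_subset_inter (Icc_subset_Icc h1.1.le h1.2.le) (Icc_subset_Icc h2.1.le h2.2.le)
        _ = ∅ := ih t t' ht ht' htt

noncomputable def theG (σ : StratB a₀ b₀) (hab : a₀ < b₀) : GenCantor where
  lo := a₀
  hi := b₀
  lo_lt_hi := hab
  e := fun n => (1/2:ℝ)^n
  e_pos := halfpow_pos
  e_anti := fun m n h => pow_lt_pow_right_of_lt_one₀ (by norm_num) (by norm_num) h
  e_lim := tendsto_pow_atTop_nhds_zero_of_lt_one (by norm_num) (by norm_num)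
  c := cfun σ
  d := dfun σ
  diam_pos := fun l _ => sub_pos.2 (cfun_lt_dfun σ hab l)
  diam_lt := by
    intro l hl
    rcases list_eq_nil_or_append l with rfl | ⟨t, i, rfl⟩
    · exact absurd rfl hl
    · have := diam_lt' σ hab t i
      simpa using this
  root_sub := by
    intro i
    have h := nested' σ hab [] i
    exact Icc_subset_Icc h.1.le h.2.le
  nested := fun l _ i => by
    have h := nested' σ hab l i
    exact Icc_subset_Icc h.1.le h.2.le
  disj := fun l => level_disj_aux σ hab (l.length + 1) (l ++ [false]) (l ++ [true])
    (by simp) (by simp) (by simp)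

end Stmt6Aux
/-- In the Cantor game on `[a₀, b₀]` with an uncountable target set,
the limit set of any strategy for player B contains a generalized Cantor set. -/
theorem stmt6 (a₀ b₀ : ℝ) (hab : a₀ < b₀) (S : Set ℝ) (hS : S ⊆ Set.Icc a₀ b₀)
    (hSunc : ¬ S.Countable) (σ : StratB a₀ b₀) :
    ∃ C : Set ℝ, IsGenCantorSet C ∧ C ⊆ limitSetB σ := by
  classical
  refine ⟨(Stmt6Aux.theG σ hab).C, ⟨_, rfl⟩, ?_⟩
  intro x hx
  simp only [GenCantor.C, Set.mem_iInter, Set.mem_iUnion, Set.mem_setOf_eq] at hx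
  have hx' : ∀ n : ℕ, ∃ l : List Bool, l.length = n + 1 ∧
      x ∈ Set.Icc (Stmt6Aux.cfun σ l) (Stmt6Aux.dfun σ l) := by
    intro n
    obtain ⟨l, hl, hxl⟩ := hx n
    exact ⟨l, hl, hxl⟩
  choose L hL1 hL2 using hx'
  have hLne : ∀ n, L n ≠ [] := by
    intro n h
    have := hL1 n
    rw [h] at this
    simp at this
  -- coherence of the chosen levels
  have hdrop : ∀ n, (L (n + 1)).dropLast = L n := by
    intro n
    by_contra hne
    have hsplit : (L (n+1)).dropLast ++ [(L (n+1)).getLast (hLne (n+1))] = L (n+1) :=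
      List.dropLast_append_getLast (hLne (n+1))
    have hlen : (L (n+1)).dropLast.length = n + 1 := by
      rw [List.length_dropLast, hL1 (n+1)]
      omega
    have hxd : x ∈ Set.Icc (Stmt6Aux.cfun σ ((L (n+1)).dropLast))
        (Stmt6Aux.dfun σ ((L (n+1)).dropLast)) := by
      have h := Stmt6Aux.nested' σ hab ((L (n+1)).dropLast) ((L (n+1)).getLast (hLne (n+1)))
      have hsub := Set.Icc_subset_Icc h.1.le h.2.le
      rw [hsplit] at hsub
      exact hsub (hL2 (n+1))
    have hdisj := Stmt6Aux.level_disj_aux σ hab (n+1) _ _ hlen (hL1 n) hne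
    exact absurd (Set.mem_inter hxd (hL2 n)) (by rw [hdisj]; exact not_false)
  set s : ℕ → Bool := fun n => (L n).getLast (hLne n) with hs
  have hLsucc : ∀ n, L (n + 1) = L n ++ [s (n + 1)] := by
    intro n
    conv_lhs => rw [← List.dropLast_append_getLast (hLne (n+1))]
    rw [hdrop n]
  have hprefix : ∀ k n, k ≤ n → ∃ t, L k ++ t = L n := by
    intro k n hkn
    induction n with
    | zero =>
      have : k = 0 := Nat.le_zero.1 hkn
      subst this; exact ⟨[], by simp⟩
    | succ n ih =>
      rcases Nat.lt_or_ge k (n+1) with h | h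
      · obtain ⟨t, ht⟩ := ih (Nat.lt_succ_iff.1 h)
        exact ⟨t ++ [s (n+1)], by rw [← List.append_assoc, ht, hLsucc n]⟩
      · have : k = n + 1 := le_antisymm hkn h
        subst this; exact ⟨[], by simp⟩
  have hgetD_self : ∀ k, (L k).getD k false = s k := by
    intro k
    conv_lhs => rw [← List.dropLast_append_getLast (hLne k)]
    have hlen : (L k).dropLast.length = k := by
      rw [List.length_dropLast, hL1 k]
      omega
    rw [List.getD_append_right _ _ _ _ (le_of_eq hlen)]
    simp [hlen]
    rfl
  have hpad : ∀ n k, k ≤ n → Stmt6Aux.pad (L n) k = s k := by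
    intro n k hkn
    obtain ⟨t, ht⟩ := hprefix k n hkn
    have hk : k < (L k).length := by rw [hL1 k]; omega
    calc Stmt6Aux.pad (L n) k = (L k ++ t).getD k false := by rw [Stmt6Aux.pad, ht]
      _ = (L k).getD k false := List.getD_append _ _ _ _ hk
      _ = s k := hgetD_self k
  -- the play along branch s
  set a : ℕ → ℝ := fun n => (Stmt6Aux.pt σ s n).1 with ha
  set b : ℕ → ℝ := fun n => (Stmt6Aux.pt σ s n).2 with hb
  have hc_agree : ∀ n, Stmt6Aux.cfun σ (L n) = a (n+1) ∧ Stmt6Aux.dfun σ (L n) = b (n+1) := by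
    intro n
    have hcongr : Stmt6Aux.hist σ (Stmt6Aux.pad (L n)) (n+1) = Stmt6Aux.hist σ s (n+1) :=
      Stmt6Aux.hist_congr σ (n+1) (fun k hk => hpad n k (Nat.lt_succ_iff.1 hk))
    constructor
    · rw [Stmt6Aux.cfun, hL1 n, ha]
      show (Stmt6Aux.pt σ (Stmt6Aux.pad (L n)) (n+1)).1 = (Stmt6Aux.pt σ s (n+1)).1
      rw [Stmt6Aux.pt, Stmt6Aux.pt, hcongr]
    · rw [Stmt6Aux.dfun, hL1 n, hb]
      show (Stmt6Aux.pt σ (Stmt6Aux.pad (L n)) (n+1)).2 = (Stmt6Aux.pt σ s (n+1)).2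
      rw [Stmt6Aux.pt, Stmt6Aux.pt, hcongr]
  have hspec : ∀ n : ℕ, a n < a (n+1) ∧ a (n+1) < b (n+1) ∧ b (n+1) < b n ∧
      b (n+1) - a (n+1) < (1/2:ℝ)^(n+1) ∧
      b (n+1) = σ.g n (Fin.snoc (fun j => (Stmt6Aux.hist σ s n j).1) (a (n+1)))
        (fun j => (Stmt6Aux.hist σ s n j).2) := by
    intro n
    have h := (Stmt6Aux.nextPair_spec σ n _ _ (Stmt6Aux.hist_valid σ hab s n)).1 (s n)
    have e : Stmt6Aux.pt σ s (n+1) = Stmt6Aux.nextPair σ n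
        (fun j => (Stmt6Aux.hist σ s n j).1) (fun j => (Stmt6Aux.hist σ s n j).2) (s n) :=
      Stmt6Aux.pt_succ σ s n
    have ea : a n = (Stmt6Aux.hist σ s n (Fin.last n)).1 := rfl
    have eb : b n = (Stmt6Aux.hist σ s n (Fin.last n)).2 := rfl
    have ea1 : a (n+1) = (Stmt6Aux.nextPair σ n
        (fun j => (Stmt6Aux.hist σ s n j).1) (fun j => (Stmt6Aux.hist σ s n j).2) (s n)).1 := by
      rw [ha]; show (Stmt6Aux.pt σ s (n+1)).1 = _; rw [e]
    have eb1 : b (n+1) = (Stmt6Aux.nextPair σ n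
        (fun j => (Stmt6Aux.hist σ s n j).1) (fun j => (Stmt6Aux.hist σ s n j).2) (s n)).2 := by
      rw [hb]; show (Stmt6Aux.pt σ s (n+1)).2 = _; rw [e]
    rw [ea, eb, ea1, eb1]
    exact ⟨h.1, h.2.1, h.2.2.1, h.2.2.2.1, h.2.2.2.2⟩
  refine ⟨a, b, ⟨rfl, rfl, fun n => ⟨(hspec n).1, (hspec n).2.1, (hspec n).2.2.1⟩⟩, ?_, ?_⟩
  · -- consistency with σ
    intro n
    have e2 : (fun i : Fin (n+1) => b ↑i) = (fun j => (Stmt6Aux.hist σ s n j).2) := by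
      funext i
      show (Stmt6Aux.hist σ s ↑i (Fin.last ↑i)).2 = _
      rw [← Stmt6Aux.hist_restrict σ s n i]
    have e1 : (fun i : Fin (n+2) => a ↑i)
        = Fin.snoc (fun j => (Stmt6Aux.hist σ s n j).1) (a (n+1)) := by
      funext i
      induction i using Fin.lastCases with
      | last =>
        rw [Fin.snoc_last]
        rfl
      | cast j =>
        rw [Fin.snoc_castSucc]
        show (Stmt6Aux.hist σ s (↑j) (Fin.last ↑j)).1 = _
        rw [← Stmt6Aux.hist_restrict σ s n j]
    rw [e1, e2]
    exact (hspec n).2.2.2.2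
  · -- convergence to x
    rw [Metric.tendsto_atTop]
    intro ε hε
    obtain ⟨N, hN⟩ := exists_pow_lt_of_lt_one hε (by norm_num : (1/2:ℝ) < 1)
    refine ⟨N + 1, ?_⟩
    intro n hn
    obtain ⟨m, rfl⟩ : ∃ m, n = m + 1 := ⟨n - 1, by omega⟩
    have hxm := hL2 m
    rw [Set.mem_Icc, (hc_agree m).1, (hc_agree m).2] at hxm
    have hdiam := (hspec m).2.2.2.1
    have hle : ((1:ℝ)/2)^(m+1) ≤ (1/2:ℝ)^N := by
      apply pow_le_pow_of_le_one (by norm_num) (by norm_num)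
      omega
    rw [Real.dist_eq, abs_of_nonpos (by linarith [hxm.1])]
    linarith [hxm.1, hxm.2]
end

section
/- In the Cantor game on [a₀, b₀] with an uncountable target set S ⊆ [a₀, b₀], if player B has a winning strategy, then: (1) [a₀, b₀] − S contains a generalized Cantor set; (2) [a₀, b₀] − S contains a nonempty perfect set; (3) [a₀, b₀] − S is dense in [a₀, b₀]. -/
open Filter Set

lemma strictMono_snoc {n : ℕ} {f : Fin (n + 1) → ℝ} (hf : StrictMono f) {x : ℝ}
    (hx : f (Fin.last n) < x) : StrictMono (Fin.snoc f x : Fin (n + 2) → ℝ) := by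
  intro i j hij
  rcases Fin.eq_castSucc_or_eq_last j with ⟨j', rfl⟩ | rfl
  · rcases Fin.eq_castSucc_or_eq_last i with ⟨i', rfl⟩ | rfl
    · simp only [Fin.snoc_castSucc]
      exact hf (Fin.castSucc_lt_castSucc_iff.mp hij)
    · rw [Fin.lt_iff_val_lt_val, Fin.val_last, Fin.coe_castSucc] at hij
      exact absurd hij (by have := j'.isLt; omega)
  · rcases Fin.eq_castSucc_or_eq_last i with ⟨i', rfl⟩ | rfl
    · simp only [Fin.snoc_castSucc, Fin.snoc_last]
      exact lt_of_le_of_lt (hf.monotone (Fin.le_last i')) hx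
    · exact absurd hij (lt_irrefl _)

lemma strictAnti_snoc {n : ℕ} {f : Fin (n + 1) → ℝ} (hf : StrictAnti f) {x : ℝ}
    (hx : x < f (Fin.last n)) : StrictAnti (Fin.snoc f x : Fin (n + 2) → ℝ) := by
  intro i j hij
  rcases Fin.eq_castSucc_or_eq_last j with ⟨j', rfl⟩ | rfl
  · rcases Fin.eq_castSucc_or_eq_last i with ⟨i', rfl⟩ | rfl
    · simp only [Fin.snoc_castSucc]
      exact hf (Fin.castSucc_lt_castSucc_iff.mp hij)
    · rw [Fin.lt_iff_val_lt_val, Fin.val_last, Fin.coe_castSucc] at hij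
      exact absurd hij (by have := j'.isLt; omega)
  · rcases Fin.eq_castSucc_or_eq_last i with ⟨i', rfl⟩ | rfl
    · simp only [Fin.snoc_castSucc, Fin.snoc_last]
      exact lt_of_lt_of_le hx (hf.antitone (Fin.le_last i'))
    · exact absurd hij (lt_irrefl _)

noncomputable def playF {a₀ b₀ : ℝ} (σ : StratB a₀ b₀) (τ : StratA a₀ b₀) : ℕ → ℝ × ℝ
  | 0 => (a₀, b₀)
  | n + 1 =>
      let a : Fin (n + 1) → ℝ := fun i => (playF σ τ i).1
      let b : Fin (n + 1) → ℝ := fun i => (playF σ τ i).2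
      let A := τ.f n a b
      (A, σ.g n (Fin.snoc a A) b)
  decreasing_by all_goals exact i.isLt

variable {a₀ b₀ : ℝ} (σ : StratB a₀ b₀) (τ : StratA a₀ b₀)

lemma playF_zero : playF σ τ 0 = (a₀, b₀) := by rw [playF]

lemma playF_succ (n : ℕ) :
    playF σ τ (n + 1) =
      (τ.f n (fun i : Fin (n + 1) => (playF σ τ i).1) (fun i : Fin (n + 1) => (playF σ τ i).2),
       σ.g n (Fin.snoc (fun i : Fin (n + 1) => (playF σ τ i).1)
          (τ.f n (fun i : Fin (n + 1) => (playF σ τ i).1) (fun i : Fin (n + 1) => (playF σ τ i).2)))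
        (fun i : Fin (n + 1) => (playF σ τ i).2)) := by
  rw [playF]

lemma validB_of_validA {n : ℕ} {a b : Fin (n + 1) → ℝ} (H : ValidHistA a₀ b₀ a b) {A : ℝ}
    (h1 : a (Fin.last n) < A) (h2 : A < b (Fin.last n)) :
    ValidHistB a₀ b₀ (Fin.snoc a A) b := by
  obtain ⟨ha0, hb0, hma, hmb, hab⟩ := H
  have h0 : (0 : Fin (n + 2)) = Fin.castSucc 0 := by ext; simp
  refine ⟨?_, hb0, strictMono_snoc hma h1, hmb, ?_⟩
  · rw [h0, Fin.snoc_castSucc]; exact ha0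
  · rw [Fin.snoc_last]; exact h2

lemma playF_valid (hab : a₀ < b₀) :
    ∀ n, ValidHistA a₀ b₀ (fun i : Fin (n + 1) => (playF σ τ i).1)
      (fun i : Fin (n + 1) => (playF σ τ i).2) := by
  intro n
  induction n with
  | zero =>
      refine ⟨by simp [playF_zero], by simp [playF_zero], ?_, ?_, by simp [playF_zero, Fin.last]; exact hab⟩
      · intro i j hij
        exact absurd (show (i:ℕ) < (j:ℕ) from hij) (by have := i.isLt; have := j.isLt; omega)
      · intro i j hij
        exact absurd (show (i:ℕ) < (j:ℕ) from hij) (by have := i.isLt; have := j.isLt; omega)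
  | succ n IH =>
      have hA := τ.valid n _ _ IH
      have HB := validB_of_validA IH hA.1 hA.2
      have hBv := σ.valid n _ _ HB
      have hsnocA : (fun i : Fin (n + 2) => (playF σ τ i).1) =
          Fin.snoc (fun i : Fin (n + 1) => (playF σ τ i).1)
            (τ.f n (fun i : Fin (n + 1) => (playF σ τ i).1)
              (fun i : Fin (n + 1) => (playF σ τ i).2)) := by
        funext i
        rcases Fin.eq_castSucc_or_eq_last i with ⟨i', rfl⟩ | rfl
        · rw [Fin.snoc_castSucc, Fin.coe_castSucc]
        · simp only [Fin.snoc_last, Fin.val_last]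
          rw [playF_succ]
      have hsnocB : (fun i : Fin (n + 2) => (playF σ τ i).2) =
          Fin.snoc (fun i : Fin (n + 1) => (playF σ τ i).2)
            (σ.g n (Fin.snoc (fun i : Fin (n + 1) => (playF σ τ i).1)
              (τ.f n (fun i : Fin (n + 1) => (playF σ τ i).1)
                (fun i : Fin (n + 1) => (playF σ τ i).2)))
              (fun i : Fin (n + 1) => (playF σ τ i).2)) := by
        funext i
        rcases Fin.eq_castSucc_or_eq_last i with ⟨i', rfl⟩ | rfl
        · rw [Fin.snoc_castSucc, Fin.coe_castSucc]
        · simp only [Fin.snoc_last, Fin.val_last]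
          rw [playF_succ]
      obtain ⟨ha0, hb0, hma, hmb, hlast⟩ := IH
      have h1 := hBv.1
      rw [Fin.snoc_last] at h1
      refine ⟨by simp [playF_zero], by simp [playF_zero], ?_, ?_, ?_⟩
      · rw [hsnocA]; exact strictMono_snoc hma hA.1
      · rw [hsnocB]; exact strictAnti_snoc hmb hBv.2
      · rw [hsnocA, hsnocB, Fin.snoc_last, Fin.snoc_last]; exact h1

lemma playF_funA_succ (n : ℕ) :
    (fun i : Fin (n + 2) => (playF σ τ i).1) =
      Fin.snoc (fun i : Fin (n + 1) => (playF σ τ i).1)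
        (τ.f n (fun i : Fin (n + 1) => (playF σ τ i).1)
          (fun i : Fin (n + 1) => (playF σ τ i).2)) := by
  funext i
  rcases Fin.eq_castSucc_or_eq_last i with ⟨i', rfl⟩ | rfl
  · rw [Fin.snoc_castSucc, Fin.coe_castSucc]
  · simp only [Fin.snoc_last, Fin.val_last]
    rw [playF_succ]

lemma playF_step (hab : a₀ < b₀) (n : ℕ) :
    (playF σ τ n).1 < (playF σ τ (n + 1)).1 ∧
    (playF σ τ (n + 1)).1 < (playF σ τ (n + 1)).2 ∧
    (playF σ τ (n + 1)).2 < (playF σ τ n).2 := by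
  obtain ⟨_, _, hma, hmb, hlast⟩ := playF_valid σ τ hab (n + 1)
  have hlt : (Fin.castSucc (Fin.last n) : Fin (n + 2)) < Fin.last (n + 1) := by
    rw [Fin.lt_iff_val_lt_val, Fin.coe_castSucc, Fin.val_last, Fin.val_last]; omega
  have h1 := hma hlt
  have h2 := hmb hlt
  simp only [Fin.coe_castSucc, Fin.val_last] at h1 h2 hlast
  exact ⟨h1, hlast, h2⟩

lemma playF_isPlay (hab : a₀ < b₀) :
    IsPlay a₀ b₀ (fun n => (playF σ τ n).1) (fun n => (playF σ τ n).2) :=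
  ⟨by simp [playF_zero], by simp [playF_zero], fun n => playF_step σ τ hab n⟩

lemma playF_consistentA :
    ConsistentA τ (fun n => (playF σ τ n).1) (fun n => (playF σ τ n).2) := by
  intro n
  exact congrArg Prod.fst (playF_succ σ τ n)

lemma playF_consistentB :
    ConsistentB σ (fun n => (playF σ τ n).1) (fun n => (playF σ τ n).2) := by
  intro n
  have h := congrArg Prod.snd (playF_succ σ τ n)
  show (playF σ τ (n+1)).2 = _
  rw [h, ← playF_funA_succ]

lemma playF_A_lt_B (hab : a₀ < b₀) (n m : ℕ) : (playF σ τ n).1 < (playF σ τ m).2 := by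
  have hmono : StrictMono (fun n => (playF σ τ n).1) :=
    strictMono_nat_of_lt_succ fun n => (playF_step σ τ hab n).1
  have hanti : StrictAnti (fun n => (playF σ τ n).2) := by
    refine strictAnti_nat_of_succ_lt fun n => (playF_step σ τ hab n).2.2
  have hlt : ∀ k, (playF σ τ k).1 < (playF σ τ k).2 := by
    intro k
    cases k with
    | zero => rw [playF_zero]; exact hab
    | succ k => exact (playF_step σ τ hab k).2.1
  rcases le_or_gt n m with h | h
  · exact lt_of_le_of_lt (hmono.monotone h) (hlt m)
  · exact lt_of_lt_of_le (hlt n) (hanti.antitone h.le)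

noncomputable def playLim : ℝ := ⨆ n, (playF σ τ n).1

lemma playLim_bddAbove (hab : a₀ < b₀) : BddAbove (Set.range fun n => (playF σ τ n).1) := by
  refine ⟨b₀, ?_⟩
  rintro x ⟨n, rfl⟩
  have := playF_A_lt_B σ τ hab n 0
  rw [playF_zero] at this
  exact this.le

lemma playLim_tendsto (hab : a₀ < b₀) :
    Filter.Tendsto (fun n => (playF σ τ n).1) Filter.atTop (nhds (playLim σ τ)) := by
  refine tendsto_atTop_ciSup ?_ (playLim_bddAbove σ τ hab)
  exact (strictMono_nat_of_lt_succ fun n => (playF_step σ τ hab n).1).monotone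

lemma playLim_mem_Icc (hab : a₀ < b₀) (n : ℕ) :
    (playF σ τ n).1 ≤ playLim σ τ ∧ playLim σ τ ≤ (playF σ τ n).2 := by
  constructor
  · exact le_ciSup (playLim_bddAbove σ τ hab) n
  · exact ciSup_le fun m => (playF_A_lt_B σ τ hab m n).le

lemma playLim_mem_diff {S : Set ℝ} (hab : a₀ < b₀) (hwin : WinningB σ S) :
    playLim σ τ ∈ Set.Icc a₀ b₀ \ S :=
  hwin ⟨_, _, playF_isPlay σ τ hab, playF_consistentB σ τ, playLim_tendsto σ τ hab⟩

noncomputable def densTau (a₁ δ : ℝ) (ha : a₀ < a₁) (hb : a₁ < b₀) (hδ : 0 < δ) :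
    StratA a₀ b₀ where
  f := fun n a b => if n = 0 then a₁ else
    a (Fin.last n) + min (δ / 2 ^ (n + 1)) ((b (Fin.last n) - a (Fin.last n)) / 2)
  valid := by
    intro n a b H
    obtain ⟨ha0, hb0, _, _, hlast⟩ := H
    by_cases hn : n = 0
    · subst hn
      have hl0 : Fin.last 0 = 0 := by decide
      rw [hl0] at hlast ⊢
      rw [ha0, hb0]
      simp only [if_pos rfl]
      exact ⟨ha, hb⟩
    · simp only [if_neg hn]
      have hmin : 0 < min (δ / 2 ^ (n + 1)) ((b (Fin.last n) - a (Fin.last n)) / 2) :=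
        lt_min (by positivity) (by linarith)
      have h2 : min (δ / 2 ^ (n + 1)) ((b (Fin.last n) - a (Fin.last n)) / 2) ≤
          (b (Fin.last n) - a (Fin.last n)) / 2 := min_le_right _ _
      constructor
      · linarith
      · linarith

lemma densTau_one (a₁ δ : ℝ) (ha : a₀ < a₁) (hb : a₁ < b₀) (hδ : 0 < δ) :
    (playF σ (densTau a₁ δ ha hb hδ) 1).1 = a₁ := by
  have := congrArg Prod.fst (playF_succ σ (densTau a₁ δ ha hb hδ) 0)
  rw [this]
  simp [densTau]

lemma densTau_f_succ (a₁ δ : ℝ) (ha : a₀ < a₁) (hb : a₁ < b₀) (hδ : 0 < δ) (n : ℕ)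
    (a b : Fin (n + 2) → ℝ) :
    (densTau a₁ δ ha hb hδ).f (n + 1) a b = a (Fin.last (n + 1)) +
      min (δ / 2 ^ (n + 2)) ((b (Fin.last (n + 1)) - a (Fin.last (n + 1))) / 2) := by
  simp [densTau]

lemma densTau_succ_le (a₁ δ : ℝ) (ha : a₀ < a₁) (hb : a₁ < b₀) (hδ : 0 < δ) (n : ℕ) :
    (playF σ (densTau a₁ δ ha hb hδ) (n + 2)).1 ≤
      (playF σ (densTau a₁ δ ha hb hδ) (n + 1)).1 + δ / 2 ^ (n + 2) := by
  have h : (playF σ (densTau a₁ δ ha hb hδ) (n + 2)).1 =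
      (densTau a₁ δ ha hb hδ).f (n + 1)
        (fun i : Fin (n + 2) => (playF σ (densTau a₁ δ ha hb hδ) i).1)
        (fun i : Fin (n + 2) => (playF σ (densTau a₁ δ ha hb hδ) i).2) :=
    congrArg Prod.fst (playF_succ σ (densTau a₁ δ ha hb hδ) (n + 1))
  rw [h, densTau_f_succ]
  simp only [Fin.val_last]
  have hm : min (δ / 2 ^ (n + 2))
      (((playF σ (densTau a₁ δ ha hb hδ) (n+1)).2 - (playF σ (densTau a₁ δ ha hb hδ) (n+1)).1) / 2)
      ≤ δ / 2 ^ (n + 2) := min_le_left _ _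
  linarith

lemma densTau_bound (hab : a₀ < b₀) (a₁ δ : ℝ) (ha : a₀ < a₁) (hb : a₁ < b₀) (hδ : 0 < δ) (n : ℕ) :
    (playF σ (densTau a₁ δ ha hb hδ) (n + 1)).1 ≤ a₁ + δ - δ / 2 ^ n := by
  induction n with
  | zero =>
      rw [densTau_one]
      simp
  | succ n IH =>
      have h1 := densTau_succ_le σ a₁ δ ha hb hδ n
      have h2 : δ / 2 ^ (n + 2) + δ / 2 ^ (n + 1) ≤ δ / 2 ^ n := by
        have e1 : δ / 2 ^ (n + 1) = (δ / 2 ^ n) / 2 := by rw [pow_succ]; ring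
        have e2 : δ / 2 ^ (n + 2) = (δ / 2 ^ n) / 4 := by rw [pow_succ, pow_succ]; ring
        have h3 : 0 ≤ δ / 2 ^ n := by positivity
        rw [e1, e2]; linarith
      linarith

lemma dense_step {S : Set ℝ} (hab : a₀ < b₀) (hwin : WinningB σ S) :
    Set.Icc a₀ b₀ ⊆ closure (Set.Icc a₀ b₀ \ S) := by
  intro y hy
  rw [Metric.mem_closure_iff]
  intro ε hε
  set u := max a₀ (y - ε / 2) with hu
  set v := min b₀ (y + ε / 2) with hv
  have huv : u < v := by
    rcases hy with ⟨hy1, hy2⟩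
    rw [hu, hv]
    apply max_lt <;> [skip; skip] <;> apply lt_min <;> linarith
  set a₁ := (u + v) / 2 with ha₁
  have ha : a₀ < a₁ := lt_of_le_of_lt (le_max_left _ _) (by rw [ha₁]; linarith)
  have hb : a₁ < b₀ := lt_of_lt_of_le (by rw [ha₁]; linarith) (min_le_left _ _)
  set δ := (v - a₁) / 2 with hδdef
  have hδ : 0 < δ := by rw [hδdef, ha₁]; linarith
  set τ := densTau a₁ δ ha hb hδ with hτ
  set x := playLim σ τ with hx
  have hxmem : x ∈ Set.Icc a₀ b₀ \ S := playLim_mem_diff σ τ hab hwin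
  refine ⟨x, hxmem, ?_⟩
  have hx1 : a₁ ≤ x := by
    have := (playLim_mem_Icc σ τ hab 1).1
    rwa [hτ, densTau_one] at this
  have hx2 : x ≤ a₁ + δ := by
    rw [hx, playLim]
    refine ciSup_le fun n => ?_
    cases n with
    | zero =>
        rw [playF_zero]
        linarith
    | succ n =>
        have := densTau_bound σ hab a₁ δ ha hb hδ n
        have hp : (0:ℝ) < δ / 2 ^ n := by positivity
        rw [hτ]
        linarith
  have hxv : x < v := by rw [hδdef] at hx2; linarith
  have hxu : u < x := by rw [ha₁] at hx1; linarith
  have h1 : y - ε / 2 ≤ u := le_max_right _ _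
  have h2 : v ≤ y + ε / 2 := min_le_right _ _
  rw [Real.dist_eq, abs_lt]
  constructor <;> linarith

noncomputable def bmoveA0 (n : ℕ) (a b : Fin (n + 1) → ℝ) : ℝ :=
  b (Fin.last n) - min ((1:ℝ) / 2 ^ (n + 1)) (b (Fin.last n) - a (Fin.last n)) / 2

noncomputable def bmove (σ : StratB a₀ b₀) (n : ℕ) (a b : Fin (n + 1) → ℝ) (i : Bool) : ℝ :=
  if i then (σ.g n (Fin.snoc a (bmoveA0 n a b)) b + b (Fin.last n)) / 2 else bmoveA0 n a b

lemma bmoveA0_mem {n : ℕ} {a b : Fin (n + 1) → ℝ} (h : a (Fin.last n) < b (Fin.last n)) :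
    a (Fin.last n) < bmoveA0 n a b ∧ bmoveA0 n a b < b (Fin.last n) := by
  unfold bmoveA0
  have h1 : (0:ℝ) < min ((1:ℝ) / 2 ^ (n + 1)) (b (Fin.last n) - a (Fin.last n)) / 2 := by
    have := lt_min (show (0:ℝ) < 1 / 2 ^ (n+1) by positivity) (by linarith : (0:ℝ) < b (Fin.last n) - a (Fin.last n))
    linarith
  have h2 : min ((1:ℝ) / 2 ^ (n + 1)) (b (Fin.last n) - a (Fin.last n)) / 2 ≤
      (b (Fin.last n) - a (Fin.last n)) / 2 := by
    have := min_le_right ((1:ℝ) / 2 ^ (n + 1)) (b (Fin.last n) - a (Fin.last n))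
    linarith
  constructor <;> linarith

lemma bmove_b0 {n : ℕ} {a b : Fin (n + 1) → ℝ} (σ : StratB a₀ b₀)
    (H : ValidHistA a₀ b₀ a b) :
    bmoveA0 n a b < σ.g n (Fin.snoc a (bmoveA0 n a b)) b ∧
      σ.g n (Fin.snoc a (bmoveA0 n a b)) b < b (Fin.last n) := by
  have hm := bmoveA0_mem H.2.2.2.2
  have HB := validB_of_validA H hm.1 hm.2
  have hv := σ.valid n _ _ HB
  have h1 := hv.1
  rw [Fin.snoc_last] at h1
  exact ⟨h1, hv.2⟩

lemma bmove_valid (σ : StratB a₀ b₀) {n : ℕ} {a b : Fin (n + 1) → ℝ}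
    (H : ValidHistA a₀ b₀ a b) (i : Bool) :
    a (Fin.last n) < bmove σ n a b i ∧ bmove σ n a b i < b (Fin.last n) := by
  have hm := bmoveA0_mem H.2.2.2.2
  have hb0 := bmove_b0 σ H
  cases i with
  | false => simpa [bmove] using hm
  | true =>
      simp only [bmove, if_pos]
      constructor <;> [linarith [hm.1, hb0.1]; linarith [hb0.2]]

noncomputable def tauB (σ : StratB a₀ b₀) (s : ℕ → Bool) : StratA a₀ b₀ where
  f := fun n a b => bmove σ n a b (s n)
  valid := fun n a b H => bmove_valid σ H (s n)

lemma tauB_f (σ : StratB a₀ b₀) (s : ℕ → Bool) (n : ℕ) (a b : Fin (n + 1) → ℝ) :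
    (tauB σ s).f n a b = bmove σ n a b (s n) := rfl

lemma playF_fst_succ (n : ℕ) :
    (playF σ τ (n + 1)).1 =
      τ.f n (fun i : Fin (n + 1) => (playF σ τ i).1) (fun i : Fin (n + 1) => (playF σ τ i).2) :=
  congrArg Prod.fst (playF_succ σ τ n)

lemma playF_snd_succ (n : ℕ) :
    (playF σ τ (n + 1)).2 =
      σ.g n (Fin.snoc (fun i : Fin (n + 1) => (playF σ τ i).1) ((playF σ τ (n + 1)).1))
        (fun i : Fin (n + 1) => (playF σ τ i).2) := by
  rw [playF_fst_succ]
  exact congrArg Prod.snd (playF_succ σ τ n)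

lemma play_prefix (s s' : ℕ → Bool) (n : ℕ) (h : ∀ i < n, s i = s' i) :
    ∀ k, k ≤ n → playF σ (tauB σ s) k = playF σ (tauB σ s') k := by
  intro k
  induction k using Nat.strong_induction_on with
  | _ k IH =>
    intro hk
    match k with
    | 0 => rw [playF_zero, playF_zero]
    | (m + 1) =>
      have hA : (fun i : Fin (m + 1) => (playF σ (tauB σ s) i).1) =
          (fun i : Fin (m + 1) => (playF σ (tauB σ s') i).1) := by
        funext i
        rw [IH i (by exact i.isLt) (by have := i.isLt; omega)]
      have hB : (fun i : Fin (m + 1) => (playF σ (tauB σ s) i).2) =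
          (fun i : Fin (m + 1) => (playF σ (tauB σ s') i).2) := by
        funext i
        rw [IH i (by exact i.isLt) (by have := i.isLt; omega)]
      have hs : s m = s' m := h m (by omega)
      rw [playF_succ, playF_succ, hA, hB, tauB_f, tauB_f, hs]

def padSeq (l : List Bool) : ℕ → Bool := fun i => l.getD i false

noncomputable def cFun (σ : StratB a₀ b₀) (l : List Bool) : ℝ :=
  (playF σ (tauB σ (padSeq l)) l.length).1

noncomputable def dFun (σ : StratB a₀ b₀) (l : List Bool) : ℝ :=
  (playF σ (tauB σ (padSeq l)) l.length).2

lemma padSeq_append_eq (l : List Bool) (t : List Bool) :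
    ∀ i < l.length, padSeq (l ++ t) i = padSeq l i := by
  intro i hi
  simp [padSeq, List.getD_eq_getElem?_getD, List.getElem?_append_left hi]

lemma padSeq_concat_last (l : List Bool) (x : Bool) : padSeq (l ++ [x]) l.length = x := by
  simp [padSeq, List.getD_eq_getElem?_getD, List.getElem?_concat_length]

lemma tauB_lower (hab : a₀ < b₀) (s : ℕ → Bool) (n : ℕ) :
    (playF σ (tauB σ s) n).2 -
      min ((1:ℝ) / 2 ^ (n + 1)) ((playF σ (tauB σ s) n).2 - (playF σ (tauB σ s) n).1) / 2 ≤
    (playF σ (tauB σ s) (n + 1)).1 := by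
  have H := playF_valid σ (tauB σ s) hab n
  have hb0 := bmove_b0 σ H
  simp only [Fin.val_last] at hb0
  have hfst : (playF σ (tauB σ s) (n + 1)).1 = bmove σ n
      (fun i : Fin (n + 1) => (playF σ (tauB σ s) i).1)
      (fun i : Fin (n + 1) => (playF σ (tauB σ s) i).2) (s n) := playF_fst_succ σ _ n
  rw [hfst]
  cases hsn : s n with
  | false =>
      simp only [bmove, if_neg Bool.false_ne_true, bmoveA0, Fin.val_last]
      exact le_refl _
  | true =>
      simp only [bmove, if_pos, bmoveA0, Fin.val_last] at hb0 ⊢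
      linarith [hb0.1]

lemma tauB_width (hab : a₀ < b₀) (s : ℕ → Bool) (n : ℕ) :
    (playF σ (tauB σ s) (n + 1)).2 - (playF σ (tauB σ s) (n + 1)).1 < (1:ℝ) / 2 ^ (n + 2) := by
  have h1 := tauB_lower σ hab s n
  have h2 := (playF_step σ (tauB σ s) hab n).2.2
  have h3 : min ((1:ℝ) / 2 ^ (n + 1)) ((playF σ (tauB σ s) n).2 - (playF σ (tauB σ s) n).1) / 2
      ≤ ((1:ℝ) / 2 ^ (n + 1)) / 2 := by
    have := min_le_left ((1:ℝ) / 2 ^ (n + 1)) ((playF σ (tauB σ s) n).2 - (playF σ (tauB σ s) n).1)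
    linarith
  have h4 : ((1:ℝ) / 2 ^ (n + 1)) / 2 = 1 / 2 ^ (n + 2) := by
    rw [pow_succ]; ring
  linarith

lemma tauB_split (hab : a₀ < b₀) (l : List Bool) :
    (playF σ (tauB σ (padSeq (l ++ [false]))) (l.length + 1)).2 <
    (playF σ (tauB σ (padSeq (l ++ [true]))) (l.length + 1)).1 := by
  set n := l.length with hn
  set s0 := padSeq (l ++ [false]) with hs0
  set s1 := padSeq (l ++ [true]) with hs1
  have hagree : ∀ i < n, s0 i = s1 i := by
    intro i hi
    rw [hs0, hs1, padSeq_append_eq _ _ _ hi, padSeq_append_eq _ _ _ hi]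
  have hA : (fun i : Fin (n + 1) => (playF σ (tauB σ s0) i).1) =
      (fun i : Fin (n + 1) => (playF σ (tauB σ s1) i).1) := by
    funext i
    rw [play_prefix σ s0 s1 n hagree i (by have := i.isLt; omega)]
  have hB : (fun i : Fin (n + 1) => (playF σ (tauB σ s0) i).2) =
      (fun i : Fin (n + 1) => (playF σ (tauB σ s1) i).2) := by
    funext i
    rw [play_prefix σ s0 s1 n hagree i (by have := i.isLt; omega)]
  have H0 := playF_valid σ (tauB σ s0) hab n
  have hb0 := bmove_b0 σ H0
  have hs0n : s0 n = false := padSeq_concat_last l false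
  have hs1n : s1 n = true := padSeq_concat_last l true
  -- branch 0 values
  have hfst0 : (playF σ (tauB σ s0) (n + 1)).1 = bmoveA0 n
      (fun i : Fin (n + 1) => (playF σ (tauB σ s0) i).1)
      (fun i : Fin (n + 1) => (playF σ (tauB σ s0) i).2) := by
    rw [playF_fst_succ σ _ n, tauB_f, hs0n]
    simp [bmove]
  have hsnd0 : (playF σ (tauB σ s0) (n + 1)).2 =
      σ.g n (Fin.snoc (fun i : Fin (n + 1) => (playF σ (tauB σ s0) i).1)
          (bmoveA0 n (fun i : Fin (n + 1) => (playF σ (tauB σ s0) i).1)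
            (fun i : Fin (n + 1) => (playF σ (tauB σ s0) i).2)))
        (fun i : Fin (n + 1) => (playF σ (tauB σ s0) i).2) := by
    rw [playF_snd_succ σ _ n, hfst0]
  -- branch 1 value
  have hfst1 : (playF σ (tauB σ s1) (n + 1)).1 =
      (σ.g n (Fin.snoc (fun i : Fin (n + 1) => (playF σ (tauB σ s0) i).1)
          (bmoveA0 n (fun i : Fin (n + 1) => (playF σ (tauB σ s0) i).1)
            (fun i : Fin (n + 1) => (playF σ (tauB σ s0) i).2)))
        (fun i : Fin (n + 1) => (playF σ (tauB σ s0) i).2) +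
        (playF σ (tauB σ s0) n).2) / 2 := by
    rw [playF_fst_succ σ _ n, tauB_f, hs1n, ← hA, ← hB]
    simp [bmove, Fin.val_last]
  rw [hsnd0, hfst1]
  have := hb0.2
  simp only [Fin.val_last] at this
  linarith

lemma nested_sub (hab : a₀ < b₀) (l : List Bool) (i : Bool) :
    Set.Icc (cFun σ (l ++ [i])) (dFun σ (l ++ [i])) ⊆ Set.Icc (cFun σ l) (dFun σ l) := by
  have hlen : (l ++ [i]).length = l.length + 1 := by simp
  have hagree : ∀ j < l.length, padSeq (l ++ [i]) j = padSeq l j := padSeq_append_eq l [i]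
  have hc : cFun σ l = (playF σ (tauB σ (padSeq (l ++ [i]))) l.length).1 := by
    rw [cFun, play_prefix σ _ _ l.length hagree l.length le_rfl]
  have hd : dFun σ l = (playF σ (tauB σ (padSeq (l ++ [i]))) l.length).2 := by
    rw [dFun, play_prefix σ _ _ l.length hagree l.length le_rfl]
  have hstep := playF_step σ (tauB σ (padSeq (l ++ [i]))) hab l.length
  rw [hc, hd, cFun, dFun, hlen]
  exact Set.Icc_subset_Icc hstep.1.le hstep.2.2.le

lemma child_disj (hab : a₀ < b₀) (l : List Bool) :
    Set.Icc (cFun σ (l ++ [false])) (dFun σ (l ++ [false])) ∩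
      Set.Icc (cFun σ (l ++ [true])) (dFun σ (l ++ [true])) = ∅ := by
  have hsplit := tauB_split σ hab l
  rw [Set.eq_empty_iff_forall_notMem]
  rintro x ⟨⟨_, h1⟩, h2, _⟩
  rw [dFun, List.length_append, List.length_singleton] at h1
  rw [cFun, List.length_append, List.length_singleton] at h2
  linarith

noncomputable def gencantor (σ : StratB a₀ b₀) (hab : a₀ < b₀) : GenCantor where
  lo := a₀
  hi := b₀
  lo_lt_hi := hab
  e := fun n => (1:ℝ) / 2 ^ n
  e_pos := fun n => by positivity
  e_anti := by
    intro m n h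
    apply one_div_lt_one_div_of_lt (by positivity)
    exact pow_lt_pow_right₀ one_lt_two h
  e_lim := by
    have heq : (fun n : ℕ => (1:ℝ) / 2 ^ n) = fun n : ℕ => ((1:ℝ) / 2) ^ n := by
      funext n; rw [div_pow, one_pow]
    rw [heq]
    exact tendsto_pow_atTop_nhds_zero_of_lt_one (by norm_num) (by norm_num)
  c := cFun σ
  d := dFun σ
  diam_pos := by
    intro l hl
    have hm : ∃ m, l.length = m + 1 := by
      cases l with
      | nil => exact absurd rfl hl
      | cons a t => exact ⟨t.length, by simp⟩
    obtain ⟨m, hm⟩ := hm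
    have := (playF_step σ (tauB σ (padSeq l)) hab m).2.1
    rw [cFun, dFun, hm]
    linarith
  diam_lt := by
    intro l hl
    have hm : ∃ m, l.length = m + 1 := by
      cases l with
      | nil => exact absurd rfl hl
      | cons a t => exact ⟨t.length, by simp⟩
    obtain ⟨m, hm⟩ := hm
    have hw := tauB_width σ hab (padSeq l) m
    have hlt : (1:ℝ) / 2 ^ (m + 2) < 1 / 2 ^ (m + 1) := by
      apply one_div_lt_one_div_of_lt (by positivity)
      exact pow_lt_pow_right₀ one_lt_two (by omega)
    rw [cFun, dFun, hm]
    linarith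
  root_sub := by
    intro i
    have hstep := playF_step σ (tauB σ (padSeq [i])) hab 0
    have hz := playF_zero σ (tauB σ (padSeq [i]))
    rw [cFun, dFun]
    simp only [List.length_singleton]
    apply Set.Icc_subset_Icc
    · have : (playF σ (tauB σ (padSeq [i])) 0).1 = a₀ := by rw [hz]
      linarith [hstep.1]
    · have : (playF σ (tauB σ (padSeq [i])) 0).2 = b₀ := by rw [hz]
      linarith [hstep.2.2]
  nested := fun l _ i => nested_sub σ hab l i
  disj := fun l => child_disj σ hab l

lemma prefixSeq_length (s : ℕ → Bool) (n : ℕ) : (prefixSeq s n).length = n + 1 := by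
  simp [prefixSeq]

lemma prefixSeq_getD (s : ℕ → Bool) (n i : ℕ) (h : i < n + 1) :
    (prefixSeq s n).getD i false = s i := by
  have hlen : i < (prefixSeq s n).length := by rw [prefixSeq_length]; exact h
  rw [List.getD_eq_getElem?_getD, List.getElem?_eq_getElem hlen]
  simp only [Option.getD_some]
  show (List.ofFn fun i : Fin (n + 1) => s i)[i] = s i
  exact List.getElem_ofFn ..

lemma branch_c (hab : a₀ < b₀) (s : ℕ → Bool) (n : ℕ) :
    cFun σ (prefixSeq s n) = (playF σ (tauB σ s) (n + 1)).1 ∧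
    dFun σ (prefixSeq s n) = (playF σ (tauB σ s) (n + 1)).2 := by
  have hagree : ∀ i < n + 1, padSeq (prefixSeq s n) i = s i := by
    intro i hi
    rw [padSeq, prefixSeq_getD s n i hi]
  have h := play_prefix σ _ s (n + 1) hagree (n + 1) le_rfl
  constructor
  · rw [cFun, prefixSeq_length, h]
  · rw [dFun, prefixSeq_length, h]

lemma branchLim_mem (hab : a₀ < b₀) (s : ℕ → Bool) (n : ℕ) :
    playLim σ (tauB σ s) ∈ Set.Icc (cFun σ (prefixSeq s n)) (dFun σ (prefixSeq s n)) := by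
  obtain ⟨hc, hd⟩ := branch_c σ hab s n
  rw [hc, hd]
  exact ⟨(playLim_mem_Icc σ (tauB σ s) hab (n + 1)).1, (playLim_mem_Icc σ (tauB σ s) hab (n + 1)).2⟩

lemma branchLim_mem_C (hab : a₀ < b₀) (s : ℕ → Bool) :
    playLim σ (tauB σ s) ∈ (gencantor σ hab).C := by
  rw [GenCantor.C]
  refine Set.mem_iInter.2 fun n => ?_
  refine Set.mem_biUnion (show prefixSeq s n ∈ {l : List Bool | l.length = n + 1} from prefixSeq_length s n) ?_
  exact branchLim_mem σ hab s n

lemma disj_ne (hab : a₀ < b₀) :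
    ∀ n (l l' : List Bool), l.length = n + 1 → l'.length = n + 1 → l ≠ l' →
      Set.Icc (cFun σ l) (dFun σ l) ∩ Set.Icc (cFun σ l') (dFun σ l') = ∅ := by
  intro n
  induction n with
  | zero =>
      intro l l' hl hl' hne
      obtain ⟨t, x, rfl⟩ := l.eq_nil_or_concat'.resolve_left (by rintro rfl; simp at hl)
      obtain ⟨t', x', rfl⟩ := l'.eq_nil_or_concat'.resolve_left (by rintro rfl; simp at hl')
      have ht : t = [] := by simpa using hl
      have ht' : t' = [] := by simpa using hl'
      subst ht; subst ht'
      have hxx : x ≠ x' := by rintro rfl; exact hne rfl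
      cases x <;> cases x' <;> first
        | exact absurd rfl hxx
        | exact child_disj σ hab []
        | (rw [Set.inter_comm]; exact child_disj σ hab [])
  | succ m IH =>
      intro l l' hl hl' hne
      obtain ⟨t, x, rfl⟩ := l.eq_nil_or_concat'.resolve_left (by rintro rfl; simp at hl)
      obtain ⟨t', x', rfl⟩ := l'.eq_nil_or_concat'.resolve_left (by rintro rfl; simp at hl')
      have ht : t.length = m + 1 := by simpa using hl
      have ht' : t'.length = m + 1 := by simpa using hl'
      by_cases htt : t = t'
      · subst htt
        have hxx : x ≠ x' := by rintro rfl; exact hne rfl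
        cases x <;> cases x' <;> first
          | exact absurd rfl hxx
          | exact child_disj σ hab t
          | (rw [Set.inter_comm]; exact child_disj σ hab t)
      · have hd := IH t t' ht ht' htt
        refine Set.subset_empty_iff.1 ?_
        calc Set.Icc (cFun σ (t ++ [x])) (dFun σ (t ++ [x])) ∩
              Set.Icc (cFun σ (t' ++ [x'])) (dFun σ (t' ++ [x']))
            ⊆ Set.Icc (cFun σ t) (dFun σ t) ∩ Set.Icc (cFun σ t') (dFun σ t') :=
              Set.inter_subset_inter (nested_sub σ hab t x) (nested_sub σ hab t' x')
          _ ⊆ ∅ := hd.le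

lemma mem_C_iff (hab : a₀ < b₀) (x : ℝ) :
    x ∈ (gencantor σ hab).C ↔
      ∀ n, ∃ l : List Bool, l.length = n + 1 ∧ x ∈ Set.Icc (cFun σ l) (dFun σ l) := by
  rw [GenCantor.C]
  simp only [Set.mem_iInter, Set.mem_iUnion, Set.mem_setOf_eq, exists_prop]
  exact Iff.rfl

lemma prefixSeq_succ (s : ℕ → Bool) (n : ℕ) :
    prefixSeq s (n + 1) = prefixSeq s n ++ [s (n + 1)] := by
  rw [prefixSeq, List.ofFn_succ', List.concat_eq_append, prefixSeq]
  simp only [Fin.coe_castSucc, Fin.val_last]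

lemma exists_branch (hab : a₀ < b₀) (x : ℝ) (hx : x ∈ (gencantor σ hab).C) :
    ∃ s : ℕ → Bool, ∀ n, x ∈ Set.Icc (cFun σ (prefixSeq s n)) (dFun σ (prefixSeq s n)) := by
  have h := (mem_C_iff σ hab x).1 hx
  choose L hLlen hLmem using h
  have huniq : ∀ n (l : List Bool), l.length = n + 1 →
      x ∈ Set.Icc (cFun σ l) (dFun σ l) → l = L n := by
    intro n l hl hmem
    by_contra hne
    have := disj_ne σ hab n l (L n) hl (hLlen n) hne
    exact absurd (Set.mem_inter hmem (hLmem n)) (by rw [this]; exact Set.notMem_empty x)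
  have hchain : ∀ n, ∃ y : Bool, L (n + 1) = L n ++ [y] := by
    intro n
    obtain ⟨t, y, hty⟩ := (L (n + 1)).eq_nil_or_concat'.resolve_left
      (by intro h0; have := hLlen (n + 1); rw [h0] at this; simp at this)
    have ht : t.length = n + 1 := by have := hLlen (n + 1); rw [hty] at this; simpa using this
    have hmem : x ∈ Set.Icc (cFun σ t) (dFun σ t) := by
      have := hLmem (n + 1)
      rw [hty] at this
      exact nested_sub σ hab t y this
    have := huniq n t ht hmem
    exact ⟨y, by rw [hty, this]⟩
  refine ⟨fun n => (L n).getD n false, fun n => ?_⟩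
  have hpre : ∀ n, prefixSeq (fun n => (L n).getD n false) n = L n := by
    intro n
    induction n with
    | zero =>
        obtain ⟨t, y, hty⟩ := (L 0).eq_nil_or_concat'.resolve_left
          (by intro h0; have := hLlen 0; rw [h0] at this; simp at this)
        have ht : t = [] := by have := hLlen 0; rw [hty] at this; simpa using this
        subst ht
        simp only [prefixSeq, List.ofFn_succ, List.ofFn_zero, Fin.val_zero]
        rw [hty]
        simp
    | succ n IH =>
        obtain ⟨y, hy⟩ := hchain n
        have hsucc := prefixSeq_succ (fun n => (L n).getD n false) n
        rw [hsucc, IH]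
        have hlast : (L (n + 1)).getD (n + 1) false = y := by
          rw [hy]
          have := padSeq_concat_last (L n) y
          rw [padSeq] at this
          rw [show n + 1 = (L n).length from (hLlen n).symm]
          exact this
        rw [hlast, ← hy]
  rw [hpre n]
  exact hLmem n

lemma pow_small (ε : ℝ) (hε : 0 < ε) : ∃ n : ℕ, (1:ℝ) / 2 ^ (n + 2) < ε := by
  obtain ⟨n, hn⟩ := exists_pow_lt_of_lt_one hε (by norm_num : (1:ℝ)/2 < 1)
  refine ⟨n, lt_of_le_of_lt ?_ (by rwa [div_pow, one_pow] at hn)⟩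
  apply one_div_le_one_div_of_le (by positivity)
  exact pow_le_pow_right₀ one_le_two (by omega)

lemma eq_branchLim (hab : a₀ < b₀) (x : ℝ) (s : ℕ → Bool)
    (hs : ∀ n, x ∈ Set.Icc (cFun σ (prefixSeq s n)) (dFun σ (prefixSeq s n))) :
    x = playLim σ (tauB σ s) := by
  by_contra hne
  have hd : 0 < |x - playLim σ (tauB σ s)| := abs_pos.2 (sub_ne_zero.2 hne)
  obtain ⟨n, hn⟩ := pow_small _ hd
  have h1 := hs (n + 1)
  have h2 := branchLim_mem σ hab s (n + 1)
  obtain ⟨hc, hdd⟩ := branch_c σ hab s (n + 1)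
  rw [hc, hdd] at h1 h2
  have hw := tauB_width σ hab s (n + 1)
  rw [Set.mem_Icc] at h1 h2
  have : |x - playLim σ (tauB σ s)| ≤
      (playF σ (tauB σ s) (n + 2)).2 - (playF σ (tauB σ s) (n + 2)).1 := by
    rw [abs_sub_le_iff]
    constructor <;> linarith [h1.1, h1.2, h2.1, h2.2]
  have hww : (playF σ (tauB σ s) (n + 2)).2 - (playF σ (tauB σ s) (n + 2)).1 < 1 / 2 ^ (n + 3) := by
    exact tauB_width σ hab s (n + 1)
  have : (1:ℝ) / 2 ^ (n + 3) ≤ 1 / 2 ^ (n + 2) := by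
    apply one_div_le_one_div_of_le (by positivity)
    exact pow_le_pow_right₀ one_le_two (by omega)
  linarith

lemma C_subset {S : Set ℝ} (hab : a₀ < b₀) (hwin : WinningB σ S) :
    (gencantor σ hab).C ⊆ Set.Icc a₀ b₀ \ S := by
  intro x hx
  obtain ⟨s, hs⟩ := exists_branch σ hab x hx
  rw [eq_branchLim σ hab x s hs]
  exact playLim_mem_diff σ (tauB σ s) hab hwin

lemma C_nonempty (hab : a₀ < b₀) : (gencantor σ hab).C.Nonempty :=
  ⟨playLim σ (tauB σ (fun _ => false)), branchLim_mem_C σ hab _⟩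

lemma C_closed (hab : a₀ < b₀) : IsClosed (gencantor σ hab).C := by
  rw [GenCantor.C]
  refine isClosed_iInter fun n => ?_
  exact (List.finite_length_eq Bool (n + 1)).isClosed_biUnion fun l _ => isClosed_Icc

lemma C_perfect (hab : a₀ < b₀) : PerfectSet (gencantor σ hab).C := by
  refine ⟨C_closed σ hab, fun x hx => ?_⟩
  rw [Metric.mem_closure_iff]
  intro ε hε
  obtain ⟨n, hn⟩ := pow_small ε hε
  obtain ⟨s, hs⟩ := exists_branch σ hab x hx
  set s' : ℕ → Bool := fun i => if i = n + 1 then !(s (n + 1)) else s i with hs'def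
  set y := playLim σ (tauB σ s') with hydef
  have hyC : y ∈ (gencantor σ hab).C := branchLim_mem_C σ hab s'
  have hagree : ∀ i < n + 1, s' i = s i := by
    intro i hi
    rw [hs'def]
    simp only [if_neg (by omega : i ≠ n + 1)]
  have hprefeq : prefixSeq s' n = prefixSeq s n := by
    rw [prefixSeq, prefixSeq]
    congr 1
    funext i
    exact hagree i i.isLt
  have hprefne : prefixSeq s (n + 1) ≠ prefixSeq s' (n + 1) := by
    intro heq
    have h1 : (prefixSeq s (n + 1)).getD (n + 1) false = s (n + 1) :=
      prefixSeq_getD s (n + 1) (n + 1) (by omega)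
    have h2 : (prefixSeq s' (n + 1)).getD (n + 1) false = s' (n + 1) :=
      prefixSeq_getD s' (n + 1) (n + 1) (by omega)
    rw [heq, h2] at h1
    rw [hs'def] at h1
    simp at h1
  have hxy : x ≠ y := by
    intro heq
    have hdisj := disj_ne σ hab (n + 1) (prefixSeq s (n + 1)) (prefixSeq s' (n + 1))
      (prefixSeq_length s (n + 1)) (prefixSeq_length s' (n + 1)) hprefne
    have hxmem := hs (n + 1)
    have hymem := branchLim_mem σ hab s' (n + 1)
    rw [← hydef] at hymem
    rw [heq] at hxmem
    exact absurd (Set.mem_inter hxmem hymem) (by rw [hdisj]; exact Set.notMem_empty x)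
  refine ⟨y, Set.mem_diff_of_mem hyC (by simpa using hxy.symm), ?_⟩
  -- both x and y are in the interval of prefixSeq s n
  have hxmem := hs n
  have hymem := branchLim_mem σ hab s' n
  rw [← hydef, hprefeq] at hymem
  obtain ⟨hc, hd⟩ := branch_c σ hab s n
  rw [hc, hd, Set.mem_Icc] at hxmem hymem
  have hw := tauB_width σ hab s n
  rw [Real.dist_eq, abs_sub_lt_iff]
  constructor <;> linarith [hxmem.1, hxmem.2, hymem.1, hymem.2]

/-- If player B has a winning strategy then `[a₀, b₀] − S` contains
a generalized Cantor set, contains a nonempty perfect set, and is dense in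
`[a₀, b₀]`. -/
theorem stmt8 (a₀ b₀ : ℝ) (hab : a₀ < b₀) (S : Set ℝ) (hS : S ⊆ Set.Icc a₀ b₀)
    (hSunc : ¬ S.Countable) (h : ∃ σ : StratB a₀ b₀, WinningB σ S) :
    (∃ C : Set ℝ, IsGenCantorSet C ∧ C ⊆ Set.Icc a₀ b₀ \ S) ∧
    (∃ P : Set ℝ, P.Nonempty ∧ PerfectSet P ∧ P ⊆ Set.Icc a₀ b₀ \ S) ∧
    Set.Icc a₀ b₀ ⊆ closure (Set.Icc a₀ b₀ \ S) := by
  obtain ⟨σ, hσ⟩ := h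
  exact ⟨⟨(gencantor σ hab).C, ⟨gencantor σ hab, rfl⟩, C_subset σ hab hσ⟩,
    ⟨(gencantor σ hab).C, C_nonempty σ hab, C_perfect σ hab, C_subset σ hab hσ⟩,
    dense_step σ hab hσ⟩
end
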